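/- arXiv:1708.01777 — 3 statements merged into one kernel-verified Lean document; each statement's English description precedes it below -/
import Mathlib

section
/- Let W3 be the 3-wheel: the directed 3-cycle on vertices u1, u2, u3 together with a centre vertex c and arcs cu1, cu2, cu3. A digraph D contains a W3-subdivision with centre v if and only if there exists a strong component Γ of D - v and a set X of three distinct vertices of Γ such that there are three independent (v, X)-dipaths in D - (V(Γ) \ X) and Γ contains an X-tripod. -/
open List

variable {V : Type*}

/-- The interior (internal vertices) of a path given as a list of vertices. -/
def interiorL (l : List V) : List V := l.tail.dropLast

/-- `l` is a directed path (dipath) in the digraph `D`. -/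
def IsDipath (D : V → V → Prop) (l : List V) : Prop :=
  l ≠ [] ∧ l.Chain' D ∧ l.Nodup

/-- `l` is a dipath from `x` to `y` in `D`. -/
def DipathFromTo (D : V → V → Prop) (l : List V) (x y : V) : Prop :=
  IsDipath D l ∧ l.head? = some x ∧ l.getLast? = some y

/-- `l` is a directed cycle in `D` (length at least 2, digraphs being strict). -/
def IsDicycle (D : V → V → Prop) (l : List V) : Prop :=
  2 ≤ l.length ∧ l.Nodup ∧ l.Chain' D ∧ ∃ a ∈ l.getLast?, ∃ b ∈ l.head?, D a b

/-- The restriction (induced subdigraph) of `D` to the vertex set `A`. -/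
def restrict (D : V → V → Prop) (A : Set V) : V → V → Prop :=
  fun u v => D u v ∧ u ∈ A ∧ v ∈ A

/-- Reachability by a dipath inside the vertex set `A`. -/
def ReachIn (D : V → V → Prop) (A : Set V) : V → V → Prop :=
  Relation.ReflTransGen (restrict D A)

/-- Reachability by a dipath. -/
def Reach (D : V → V → Prop) : V → V → Prop := Relation.ReflTransGen D

/-- `x` appears strictly before `y` along the list `l`. -/
def Before (l : List V) (x y : V) : Prop :=
  ∃ i j : ℕ, i < j ∧ l[i]? = some x ∧ l[j]? = some y

/-- `x` and `y` are consecutive (in this order) in `l`. -/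
def ConsecIn (l : List V) (x y : V) : Prop :=
  ∃ i : ℕ, l[i]? = some x ∧ l[i + 1]? = some y

/-- `D` contains a subdivision of `F`, realized by the branch-vertex map `branch` and,
for every arc `uv` of `F`, the dipath `P u v` from `branch u` to `branch v`;
the paths have length at least one and are internally disjoint from each other
and from the branch vertices. -/
def IsSubdivisionIn {W : Type*} (F : W → W → Prop) (D : V → V → Prop)
    (branch : W → V) (P : W → W → List V) : Prop :=
  Function.Injective branch ∧
  (∀ u v : W, F u v →
    DipathFromTo D (P u v) (branch u) (branch v) ∧ 2 ≤ (P u v).length) ∧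
  (∀ u v : W, F u v → ∀ x ∈ interiorL (P u v), ∀ w : W, x ≠ branch w) ∧
  (∀ u v u' v' : W, F u v → F u' v' → (u, v) ≠ (u', v') →
    ∀ x ∈ interiorL (P u v), x ∉ interiorL (P u' v'))

/-- `D` contains a subdivision of `F`. -/
def ContainsSubdivision {W : Type*} (F : W → W → Prop) (D : V → V → Prop) : Prop :=
  ∃ (branch : W → V) (P : W → W → List V), IsSubdivisionIn F D branch P

/-- An `{x1,x2,x3}`-tripod: a directed cycle `C` together with three pairwise disjoint
dipaths `P1, P2, P3` starting at `x1, x2, x3` respectively and ending on `C`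
(the paths may have length 0). -/
def IsTripod (D : V → V → Prop) (x1 x2 x3 : V) (C P1 P2 P3 : List V) : Prop :=
  IsDicycle D C ∧
  IsDipath D P1 ∧ IsDipath D P2 ∧ IsDipath D P3 ∧
  P1.head? = some x1 ∧ P2.head? = some x2 ∧ P3.head? = some x3 ∧
  (∀ a ∈ P1.getLast?, a ∈ C) ∧ (∀ a ∈ P2.getLast?, a ∈ C) ∧ (∀ a ∈ P3.getLast?, a ∈ C) ∧
  (∀ z, z ∈ P1 → z ∉ P2) ∧ (∀ z, z ∈ P1 → z ∉ P3) ∧ (∀ z, z ∈ P2 → z ∉ P3)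

/-- An unfolded tripod: each leg meets the cycle only in its terminal vertex and
meets `{x1,x2,x3}` only in its initial vertex. -/
def IsUnfoldedTripod (D : V → V → Prop) (x1 x2 x3 : V) (C P1 P2 P3 : List V) : Prop :=
  IsTripod D x1 x2 x3 C P1 P2 P3 ∧
  (∀ z ∈ P1, z ∈ C → P1.getLast? = some z) ∧
  (∀ z ∈ P2, z ∈ C → P2.getLast? = some z) ∧
  (∀ z ∈ P3, z ∈ C → P3.getLast? = some z) ∧
  (∀ z ∈ P1, (z = x1 ∨ z = x2 ∨ z = x3) → P1.head? = some z) ∧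
  (∀ z ∈ P2, (z = x1 ∨ z = x2 ∨ z = x3) → P2.head? = some z) ∧
  (∀ z ∈ P3, (z = x1 ∨ z = x2 ∨ z = x3) → P3.head? = some z)

/-- The 3-wheel `W₃`: directed cycle `0 → 1 → 2 → 0` with centre `3` dominating all
cycle vertices. -/
def W3 : Fin 4 → Fin 4 → Prop := fun u v =>
  (u, v) ∈ ([(0, 1), (1, 2), (2, 0), (3, 0), (3, 1), (3, 2)] : List (Fin 4 × Fin 4))

section Infra
variable {V : Type*} {R D : V → V → Prop} {A : Set V} {l m : List V} {x y w v : V}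

theorem chain'_append_iff {l₁ l₂ : List V} : (l₁ ++ l₂).Chain' R ↔
    l₁.Chain' R ∧ l₂.Chain' R ∧ ∀ x ∈ l₁.getLast?, ∀ y ∈ l₂.head?, R x y :=
  List.isChain_append
theorem chain'_cons_cons_iff {a b : V} {l : List V} :
    (a :: b :: l).Chain' R ↔ R a b ∧ (b :: l).Chain' R :=
  List.isChain_cons_cons

theorem chain'_pre (h : (l ++ m).Chain' R) : l.Chain' R := (List.isChain_append.mp h).1
theorem chain'_suf (h : (l ++ m).Chain' R) : m.Chain' R := (List.isChain_append.mp h).2.1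
theorem chain'_link (h : (l ++ m).Chain' R) : ∀ a ∈ l.getLast?, ∀ b ∈ m.head?, R a b :=
  (List.isChain_append.mp h).2.2

theorem mem_getLast? (h : l.getLast? = some x) : x ∈ l := by
  obtain ⟨ys, rfl⟩ := List.getLast?_eq_some_iff.mp h
  simp

theorem head?_append_cons : ∀ (l : List V) (x : V) (t : List V),
    (l ++ x :: t).head? = (l ++ [x]).head?
  | [], _, _ => rfl
  | _ :: _, _, _ => rfl

theorem mem_A_of_chain'_restrict (h : l.Chain' (restrict D A)) (hlen : 2 ≤ l.length) :
    ∀ w ∈ l, w ∈ A := by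
  induction l with
  | nil => simp
  | cons a t ih =>
    cases t with
    | nil => simp at hlen
    | cons b s =>
      rw [chain'_cons_cons_iff] at h
      intro w hw
      rcases List.mem_cons.mp hw with rfl | hw
      · exact h.1.2.1
      · cases s with
        | nil => rw [List.mem_singleton] at hw; subst hw; exact h.1.2.2
        | cons c u => exact ih h.2 (by simp) w hw

theorem chain'_restrict_of_subset (h : l.Chain' D) (hA : ∀ w ∈ l, w ∈ A) :
    l.Chain' (restrict D A) := by
  induction l with
  | nil => exact List.isChain_nil
  | cons a t ih =>
    cases t with
    | nil => exact List.isChain_singleton _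
    | cons b s =>
      rw [chain'_cons_cons_iff] at h ⊢
      exact ⟨⟨h.1, hA a (by simp), hA b (by simp)⟩,
        ih h.2 fun w hw => hA w (List.mem_cons_of_mem a hw)⟩

theorem reach_of_head_chain' (h : l.Chain' R) (hx : l.head? = some x) (hy : y ∈ l) :
    Relation.ReflTransGen R x y := by
  induction l generalizing x with
  | nil => simp at hy
  | cons a t ih =>
    rw [List.head?_cons, Option.some_inj] at hx
    subst hx
    rcases List.mem_cons.mp hy with rfl | hy
    · exact Relation.ReflTransGen.refl
    · cases t with
      | nil => simp at hy
      | cons b s =>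
        rw [chain'_cons_cons_iff] at h
        exact Relation.ReflTransGen.head h.1 (ih h.2 (by simp) hy)

theorem reach_getLast_of_chain' (h : l.Chain' R) (hx : x ∈ l) :
    ∀ y ∈ l.getLast?, Relation.ReflTransGen R x y := by
  intro y hy
  obtain ⟨s, t, rfl⟩ := List.append_of_mem hx
  have hsuf : (x :: t).Chain' R := chain'_suf h
  have hlast : (x :: t).getLast? = some y := by
    rwa [List.getLast?_append_of_ne_nil s (by simp)] at hy
  exact reach_of_head_chain' hsuf (by simp) (mem_getLast? hlast)

theorem split_at_first (S : Set V) :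
    ∀ (l : List V), (∃ y ∈ l, y ∈ S) →
      ∃ l₁ x l₂, l = l₁ ++ x :: l₂ ∧ x ∈ S ∧ ∀ y ∈ l₁, y ∉ S := by
  intro l
  induction l with
  | nil => rintro ⟨y, hy, -⟩; simp at hy
  | cons a t ih =>
    intro hex
    by_cases ha : a ∈ S
    · exact ⟨[], a, t, by simp, ha, by simp⟩
    · have hex' : ∃ y ∈ t, y ∈ S := by
        obtain ⟨y, hy, hyS⟩ := hex
        rcases List.mem_cons.mp hy with rfl | hy
        · exact absurd hyS ha
        · exact ⟨y, hy, hyS⟩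
      obtain ⟨l₁, x, l₂, rfl, hxS, hl₁⟩ := ih hex'
      refine ⟨a :: l₁, x, l₂, rfl, hxS, ?_⟩
      intro y hy
      rcases List.mem_cons.mp hy with rfl | hy
      · exact ha
      · exact hl₁ y hy

theorem dipath_concat (hl : DipathFromTo D l x y) (hm : DipathFromTo D m y w)
    (hmeet : ∀ a ∈ l, a ∈ m → a = y) : DipathFromTo D (l ++ m.tail) x w := by
  obtain ⟨⟨hlne, hlch, hlnd⟩, hlh, hll⟩ := hl
  obtain ⟨⟨hmne, hmch, hmnd⟩, hmh, hml⟩ := hm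
  cases m with
  | nil => simp at hmh
  | cons b t =>
    rw [List.head?_cons, Option.some_inj] at hmh
    subst hmh
    have hynt : b ∉ t := (List.nodup_cons.mp hmnd).1
    simp only [List.tail_cons]
    refine ⟨⟨by simp [hlne], ?_, ?_⟩, ?_, ?_⟩
    · rw [chain'_append_iff]
      refine ⟨hlch, (List.isChain_cons.mp hmch).2, ?_⟩
      intro a ha c hc
      rw [hll, Option.mem_def, Option.some_inj] at ha
      subst ha
      exact (List.isChain_cons.mp hmch).1 c hc
    · rw [List.nodup_append']
      refine ⟨hlnd, (List.nodup_cons.mp hmnd).2, ?_⟩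
      intro a ha hat
      have := hmeet a ha (List.mem_cons_of_mem _ hat)
      subst this
      exact hynt hat
    · cases t with
      | nil => simpa using hlh
      | cons c s =>
        rw [head?_append_cons]
        cases l with
        | nil => simp at hlne
        | cons d u => simpa using hlh
    · cases t with
      | nil =>
        simp only [List.getLast?_singleton, Option.some_inj] at hml
        subst hml
        simpa using hll
      | cons c s =>
        rw [List.getLast?_append_of_ne_nil l (by simp)]
        simpa using hml

theorem two_le_length_of_dipath (h : DipathFromTo D l x y) (hxy : x ≠ y) : 2 ≤ l.length := by
  obtain ⟨⟨hne, -, -⟩, hh, hl⟩ := h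
  cases l with
  | nil => simp at hh
  | cons a t =>
    cases t with
    | nil =>
      rw [List.head?_cons, Option.some_inj] at hh
      rw [List.getLast?_singleton, Option.some_inj] at hl
      exact absurd (hh.symm.trans hl) hxy
    | cons b s => simp

theorem mem_of_mem_interiorL (h : w ∈ interiorL l) : w ∈ l := by
  unfold interiorL at h
  exact List.mem_of_mem_tail (List.dropLast_sublist _ |>.mem h)

theorem ne_head_of_mem_interiorL (hnd : l.Nodup) (hh : l.head? = some x)
    (h : w ∈ interiorL l) : w ≠ x := by
  cases l with
  | nil => simp at hh
  | cons a t =>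
    rw [List.head?_cons, Option.some_inj] at hh
    subst hh
    rintro rfl
    exact (List.nodup_cons.mp hnd).1 (List.mem_of_mem_dropLast h)

theorem ne_getLast_of_mem_interiorL (hnd : l.Nodup) (hh : l.getLast? = some y)
    (h : w ∈ interiorL l) : w ≠ y := by
  obtain ⟨ys, rfl⟩ := List.getLast?_eq_some_iff.mp hh
  rintro rfl
  unfold interiorL at h
  cases ys with
  | nil => exact absurd h (by simp)
  | cons a t =>
    simp only [List.cons_append, List.tail_cons, List.dropLast_concat] at h
    rw [List.nodup_append'] at hnd
    exact hnd.2.2 (List.mem_cons_of_mem a h) (by simp)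

theorem mem_decomp (hh : l.head? = some x) (hl : l.getLast? = some y) (hw : w ∈ l) :
    w = x ∨ w ∈ interiorL l ∨ w = y := by
  cases l with
  | nil => simp at hw
  | cons a t =>
    rw [List.head?_cons, Option.some_inj] at hh
    rcases List.mem_cons.mp hw with rfl | hw'
    · exact Or.inl hh
    · cases t with
      | nil => simp at hw'
      | cons b s =>
        have hne : (b :: s) ≠ [] := by simp
        conv at hw' => rw [← List.dropLast_append_getLast hne]
        rcases List.mem_append.mp hw' with hw'' | hw''
        · exact Or.inr (Or.inl (by simpa [interiorL] using hw''))
        · right; right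
          rw [List.mem_singleton] at hw''
          have hgl : (a :: b :: s).getLast? = some ((b::s).getLast hne) := by
            rw [List.getLast?_cons_cons, List.getLast?_eq_getLast hne]
          rw [hgl, Option.some_inj] at hl
          rw [hw'', hl]

end Infra
section Infra2
variable {V : Type*} {D : V → V → Prop} {A : Set V} {l : List V} {x y : V}

theorem mem_head? (h : l.head? = some x) : x ∈ l := by
  cases l with
  | nil => simp at h
  | cons a t => rw [List.head?_cons, Option.some_inj] at h; subst h; simp

theorem mem_A_of_chain'_restrict' (h : l.Chain' (restrict D A)) (hh : l.head? = some x)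
    (hx : x ∈ A) : ∀ w ∈ l, w ∈ A := by
  cases l with
  | nil => simp
  | cons a t =>
    rw [List.head?_cons, Option.some_inj] at hh
    subst hh
    cases t with
    | nil => intro w hw; rw [List.mem_singleton] at hw; subst hw; exact hx
    | cons b s => exact mem_A_of_chain'_restrict h (by simp)

theorem head?_append_left {l l' : List V} (h : l.head? = some x) :
    (l ++ l').head? = some x := by
  cases l with
  | nil => simp at h
  | cons a t => simpa using h

theorem dipath_weaken (h : DipathFromTo (restrict D A) l x y) : DipathFromTo D l x y :=
  ⟨⟨h.1.1, h.1.2.1.imp (fun _ _ hh => hh.1), h.1.2.2⟩, h.2⟩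

theorem dicycle_weaken {C : List V} (h : IsDicycle (restrict D A) C) : IsDicycle D C := by
  obtain ⟨h1, h2, h3, a, ha, b, hb, hab⟩ := h
  exact ⟨h1, h2, h3.imp (fun _ _ hh => hh.1), a, ha, b, hb, hab.1⟩

end Infra2
section Infra3
variable {V : Type*} {D R : V → V → Prop} {A : Set V} {l m Q C : List V} {a b c d x y : V}

theorem dipath_meet (h1 : DipathFromTo D l a b) (h2 : DipathFromTo D m c d)
    (hi1 : ∀ x ∈ interiorL l, x ≠ c ∧ x ≠ d) (hi2 : ∀ x ∈ interiorL m, x ≠ a ∧ x ≠ b)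
    (hii : ∀ x ∈ interiorL l, x ∉ interiorL m) :
    ∀ z ∈ l, z ∈ m → (z = a ∨ z = b) ∧ (z = c ∨ z = d) := by
  intro z hz hz'
  have hL := mem_decomp h1.2.1 h1.2.2 hz
  have hM := mem_decomp h2.2.1 h2.2.2 hz'
  rcases hL with rfl | hzi | rfl
  · rcases hM with rfl | hzi' | rfl
    · exact ⟨Or.inl rfl, Or.inl rfl⟩
    · exact absurd rfl (hi2 _ hzi').1
    · exact ⟨Or.inl rfl, Or.inr rfl⟩
  · exfalso
    rcases hM with rfl | hzi' | rfl
    · exact (hi1 _ hzi).1 rfl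
    · exact hii _ hzi hzi'
    · exact (hi1 _ hzi).2 rfl
  · rcases hM with rfl | hzi' | rfl
    · exact ⟨Or.inr rfl, Or.inl rfl⟩
    · exact absurd rfl (hi2 _ hzi').2
    · exact ⟨Or.inr rfl, Or.inr rfl⟩

theorem dicycle_restrict (h : IsDicycle D C) (hA : ∀ z ∈ C, z ∈ A) :
    IsDicycle (restrict D A) C := by
  obtain ⟨h1, h2, h3, p, hp, q, hq, hpq⟩ := h
  exact ⟨h1, h2, chain'_restrict_of_subset h3 hA,
    p, hp, q, hq, hpq, hA p (mem_getLast? hp), hA q (mem_head? hq)⟩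

theorem dicycle_reach (h : IsDicycle R C) (hx : x ∈ C) (hy : y ∈ C) :
    Relation.ReflTransGen R x y := by
  obtain ⟨-, -, hch, p, hp, q, hq, hpq⟩ := h
  exact (reach_getLast_of_chain' hch hx p hp).trans
    ((Relation.ReflTransGen.single hpq).trans (reach_of_head_chain' hch hq hy))

theorem dicycle_of_two_dipaths (hQ : DipathFromTo D Q a b) (hm : DipathFromTo D m b a)
    (hab : a ≠ b) (hmeet : ∀ z ∈ Q, z ∈ m → z = a ∨ z = b) :
    IsDicycle D (Q ++ interiorL m) := by
  obtain ⟨⟨hQne, hQch, hQnd⟩, hQh, hQl⟩ := hQ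
  obtain ⟨⟨hmne, hmch, hmnd⟩, hmh, hml⟩ := hm
  obtain ⟨t, rfl⟩ : ∃ t, m = b :: t := by
    cases m with
    | nil => simp at hmh
    | cons e t =>
      rw [List.head?_cons, Option.some_inj] at hmh
      exact ⟨t, by rw [hmh]⟩
  · have ht : t ≠ [] := by
      rintro rfl
      rw [List.getLast?_singleton, Option.some_inj] at hml
      exact hab hml.symm
    have hglt : t.getLast ht = a := by
      have : (b :: t).getLast? = t.getLast? := by
        cases t with
        | nil => exact absurd rfl ht
        | cons c s => rw [List.getLast?_cons_cons]
      rw [this, List.getLast?_eq_getLast ht, Option.some_inj] at hml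
      exact hml
    have e2 : t = t.dropLast ++ [a] := by
      conv_lhs => rw [← List.dropLast_append_getLast ht]
      rw [hglt]
    have him : interiorL (b :: t) = t.dropLast := by simp [interiorL]
    rw [him]
    have htch : t.Chain' D := hmch.tail
    have hdlch : t.dropLast.Chain' D := chain'_pre (e2 ▸ htch)
    have hdlnd : t.dropLast.Nodup :=
      ((List.nodup_cons.mp hmnd).2).sublist (List.dropLast_sublist t)
    have hdisj : ∀ z ∈ Q, z ∉ t.dropLast := by
      intro z hz hz'
      have hzi : z ∈ interiorL (b :: t) := by rw [him]; exact hz'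
      have hzm : z ∈ b :: t := mem_of_mem_interiorL hzi
      rcases hmeet z hz hzm with rfl | rfl
      · exact ne_getLast_of_mem_interiorL hmnd hml hzi rfl
      · exact ne_head_of_mem_interiorL hmnd (by simp) hzi rfl
    refine ⟨?_, ?_, ?_, ?_⟩
    · rw [List.length_append]
      have := two_le_length_of_dipath ⟨⟨hQne, hQch, hQnd⟩, hQh, hQl⟩ hab
      omega
    · rw [List.nodup_append']
      exact ⟨hQnd, hdlnd, hdisj⟩
    · rw [chain'_append_iff]
      refine ⟨hQch, hdlch, ?_⟩
      intro p hp q hq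
      rw [hQl, Option.mem_def, Option.some_inj] at hp
      subst hp
      have hqt : q ∈ t.head? := by
        cases t with
        | nil => exact absurd rfl ht
        | cons c s =>
          cases s with
          | nil => simp at hq
          | cons c' s' => simpa using hq
      have := List.isChain_cons.mp hmch
      exact this.1 q hqt
    · by_cases hdl : t.dropLast = []
      · have hba : D b a := by
          have h' := hmch
          have ht2 : t = [a] := by rw [e2, hdl, List.nil_append]
          rw [ht2] at h'
          exact (List.isChain_cons_cons.mp h').1
        refine ⟨b, ?_, a, head?_append_left hQh, hba⟩
        rw [hdl, List.append_nil, hQl]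
        rfl
      · refine ⟨t.dropLast.getLast hdl, ?_, a, head?_append_left hQh, ?_⟩
        · rw [List.getLast?_append_of_ne_nil Q hdl, List.getLast?_eq_getLast hdl]
          rfl
        · exact chain'_link (e2 ▸ htch) _ (List.getLast?_eq_getLast hdl) a (by simp)

end Infra3
section Cyc
variable {V : Type*} {R : V → V → Prop} {C : List V} {y y1 y2 y3 : V}

theorem cycle_rotate (h : IsDicycle R C) (hy : y ∈ C) :
    ∃ C', IsDicycle R C' ∧ C'.head? = some y ∧ ∀ z, z ∈ C' ↔ z ∈ C := by
  obtain ⟨s, t, rfl⟩ := List.append_of_mem hy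
  obtain ⟨hlen, hnd, hch, hwrap⟩ := h
  have hperm : (s ++ y :: t).Perm ((y :: t) ++ s) := List.perm_append_comm
  refine ⟨(y :: t) ++ s, ⟨?_, hperm.nodup_iff.mp hnd, ?_, ?_⟩, ?_, fun z => hperm.symm.mem_iff⟩
  · rw [← hperm.length_eq]; exact hlen
  · rw [chain'_append_iff]
    refine ⟨chain'_suf hch, chain'_pre hch, ?_⟩
    intro a ha b hb
    cases s with
    | nil => simp at hb
    | cons d s' =>
      obtain ⟨a', ha', b', hb', hR⟩ := hwrap
      rw [List.getLast?_append_of_ne_nil (d :: s') (show (y :: t) ≠ [] by simp)] at ha'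
      simp only [Option.mem_def] at ha ha' hb hb'
      rw [ha] at ha'
      rw [Option.some_inj] at ha'
      simp only [List.cons_append, List.head?_cons, Option.some_inj] at hb hb'
      subst ha'; subst hb; subst hb'
      exact hR
  · cases s with
    | nil => simpa using hwrap
    | cons d s' =>
      have hlink := chain'_link hch
      refine ⟨((d :: s').getLast ?_), ?_, y, ?_, ?_⟩
      · simp
      · rw [List.getLast?_append_of_ne_nil (y :: t) (show (d :: s') ≠ [] by simp),
          Option.mem_def]
        exact List.getLast?_eq_getLast _
      · rw [head?_append_cons]
        cases t <;> simp
      · exact hlink _ (List.getLast?_eq_getLast (by simp)) y (by simp)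
  · cases t <;> simp

theorem cycle_three_split (h : IsDicycle R C) (h1 : y1 ∈ C) (h2 : y2 ∈ C) (h3 : y3 ∈ C)
    (h12 : y1 ≠ y2) (h13 : y1 ≠ y3) (h23 : y2 ≠ y3) :
    (∃ r1 s1 s2, IsDicycle R (y1 :: r1 ++ y2 :: s1 ++ y3 :: s2) ∧
      ∀ z, z ∈ y1 :: r1 ++ y2 :: s1 ++ y3 :: s2 ↔ z ∈ C) ∨
    (∃ r1 s1 s2, IsDicycle R (y1 :: r1 ++ y3 :: s1 ++ y2 :: s2) ∧
      ∀ z, z ∈ y1 :: r1 ++ y3 :: s1 ++ y2 :: s2 ↔ z ∈ C) := by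
  obtain ⟨C', hC', hh, hmem⟩ := cycle_rotate h h1
  obtain ⟨rest, rfl⟩ : ∃ rest, C' = y1 :: rest := by
    cases C' with
    | nil => simp at hh
    | cons a t => rw [List.head?_cons, Option.some_inj] at hh; exact ⟨t, by rw [hh]⟩
  have hy2 : y2 ∈ rest := by
    rcases List.mem_cons.mp ((hmem y2).mpr h2) with h' | h'
    · exact absurd h'.symm h12
    · exact h'
  have hy3 : y3 ∈ rest := by
    rcases List.mem_cons.mp ((hmem y3).mpr h3) with h' | h'
    · exact absurd h'.symm h13
    · exact h'
  obtain ⟨r1, a, t, hrest, haS, hr1⟩ :=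
    split_at_first {z | z = y2 ∨ z = y3} rest ⟨y2, hy2, Or.inl rfl⟩
  rcases haS with rfl | rfl
  · -- a = y2, find y3 in t
    have hy3t : y3 ∈ t := by
      rw [hrest] at hy3
      rcases List.mem_append.mp hy3 with h' | h'
      · exact absurd (Or.inr rfl) (hr1 y3 h')
      · rcases List.mem_cons.mp h' with h'' | h''
        · exact absurd h''.symm h23
        · exact h''
    obtain ⟨s1, s2, rfl⟩ := List.append_of_mem hy3t
    left
    refine ⟨r1, s1, s2, ?_, ?_⟩
    · have : y1 :: r1 ++ a :: s1 ++ y3 :: s2 = y1 :: rest := by rw [hrest]; simp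
      rw [this]; exact hC'
    · intro z
      have : y1 :: r1 ++ a :: s1 ++ y3 :: s2 = y1 :: rest := by rw [hrest]; simp
      rw [this]; exact hmem z
  · -- a = y3, find y2 in t
    have hy2t : y2 ∈ t := by
      rw [hrest] at hy2
      rcases List.mem_append.mp hy2 with h' | h'
      · exact absurd (Or.inl rfl) (hr1 y2 h')
      · rcases List.mem_cons.mp h' with h'' | h''
        · exact absurd h'' h23
        · exact h''
    obtain ⟨s1, s2, rfl⟩ := List.append_of_mem hy2t
    right
    refine ⟨r1, s1, s2, ?_, ?_⟩
    · have : y1 :: r1 ++ a :: s1 ++ y2 :: s2 = y1 :: rest := by rw [hrest]; simp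
      rw [this]; exact hC'
    · intro z
      have : y1 :: r1 ++ a :: s1 ++ y2 :: s2 = y1 :: rest := by rw [hrest]; simp
      rw [this]; exact hmem z

end Cyc
def wheelBranch {V : Type*} (z1 z2 z3 v : V) : Fin 4 → V :=
  fun i => if i = 0 then z1 else if i = 1 then z2 else if i = 2 then z3 else v

def wheelPaths {V : Type*} (A1 A2 A3 Q1 Q2 Q3 : List V) : Fin 4 → Fin 4 → List V :=
  fun u w =>
    if u = 0 ∧ w = 1 then A1 else if u = 1 ∧ w = 2 then A2 else if u = 2 ∧ w = 0 then A3
    else if u = 3 ∧ w = 0 then Q1 else if u = 3 ∧ w = 1 then Q2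
    else if u = 3 ∧ w = 2 then Q3 else []

theorem W3_iff (u w : Fin 4) : W3 u w ↔
    (u = 0 ∧ w = 1) ∨ (u = 1 ∧ w = 2) ∨ (u = 2 ∧ w = 0) ∨
    (u = 3 ∧ w = 0) ∨ (u = 3 ∧ w = 1) ∨ (u = 3 ∧ w = 2) := by
  unfold W3
  simp [Prod.ext_iff]

section Build
variable {V : Type*} {D : V → V → Prop} {v z1 z2 z3 : V} {r1 s1 s2 Q1 Q2 Q3 : List V}

theorem build_subdivision
    (hC : IsDicycle D (z1 :: r1 ++ z2 :: s1 ++ z3 :: s2))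
    (hvC : v ∉ z1 :: r1 ++ z2 :: s1 ++ z3 :: s2)
    (hQ1 : DipathFromTo D Q1 v z1) (hQ2 : DipathFromTo D Q2 v z2)
    (hQ3 : DipathFromTo D Q3 v z3)
    (hL1 : 2 ≤ Q1.length) (hL2 : 2 ≤ Q2.length) (hL3 : 2 ≤ Q3.length)
    (h12 : ∀ w ∈ Q1, w ∈ Q2 → w = v) (h13 : ∀ w ∈ Q1, w ∈ Q3 → w = v)
    (h23 : ∀ w ∈ Q2, w ∈ Q3 → w = v)
    (hQC1 : ∀ w ∈ Q1, w ∈ z1 :: r1 ++ z2 :: s1 ++ z3 :: s2 → w = z1)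
    (hQC2 : ∀ w ∈ Q2, w ∈ z1 :: r1 ++ z2 :: s1 ++ z3 :: s2 → w = z2)
    (hQC3 : ∀ w ∈ Q3, w ∈ z1 :: r1 ++ z2 :: s1 ++ z3 :: s2 → w = z3) :
    ∃ branch P, IsSubdivisionIn W3 D branch P ∧ branch 3 = v := by
  obtain ⟨hlen, hnd, hch, hwrap⟩ := hC
  -- nodup facts
  have hnd' := hnd
  simp only [List.nodup_cons, List.nodup_append', List.mem_append, List.mem_cons,
    not_or, List.disjoint_left] at hnd'
  obtain ⟨⟨⟨hz1r1, hr1nd⟩, ⟨hz2s1, hs1nd⟩, hA⟩, ⟨hz3s2, hs2nd⟩, hB⟩ := hnd'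
  have hz12 : z1 ≠ z2 := (hA (Or.inl rfl)).1
  have hz1s1 : z1 ∉ s1 := (hA (Or.inl rfl)).2
  have hz13 : z1 ≠ z3 := (hB (Or.inl (Or.inl rfl))).1
  have hz1s2 : z1 ∉ s2 := (hB (Or.inl (Or.inl rfl))).2
  have hz23 : z2 ≠ z3 := (hB (Or.inr (Or.inl rfl))).1
  have hz2s2 : z2 ∉ s2 := (hB (Or.inr (Or.inl rfl))).2
  have hz2r1 : z2 ∉ r1 := fun h' => (hA (Or.inr h')).1 rfl
  have hz3r1 : z3 ∉ r1 := fun h' => (hB (Or.inl (Or.inr h'))).1 rfl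
  have hz3s1 : z3 ∉ s1 := fun h' => (hB (Or.inr (Or.inr h'))).1 rfl
  have d12 : ∀ x ∈ r1, x ∉ s1 := fun x hx => (hA (Or.inr hx)).2
  have d13 : ∀ x ∈ r1, x ∉ s2 := fun x hx => (hB (Or.inl (Or.inr hx))).2
  have d23 : ∀ x ∈ s1, x ∉ s2 := fun x hx => (hB (Or.inr (Or.inr hx))).2
  -- v facts
  simp only [List.cons_append, List.mem_cons, List.mem_append, not_or] at hvC
  obtain ⟨hvz1, ⟨hvr1, hvz2, hvs1⟩, hvz3, hvs2⟩ := hvC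
  -- membership in the cycle
  have memL : ∀ z, z ∈ z1 :: r1 ++ z2 :: s1 ++ z3 :: s2 ↔
      z = z1 ∨ z ∈ r1 ∨ z = z2 ∨ z ∈ s1 ∨ z = z3 ∨ z ∈ s2 := by
    intro z; simp [or_assoc]
  -- chain' decomposition
  have hch1 : ((z1 :: r1) ++ ((z2 :: s1) ++ (z3 :: s2))).Chain' D := by
    rw [← List.append_assoc]; exact hch
  have hpre1 : (z1 :: r1).Chain' D := chain'_pre hch1
  have hmid : ((z2 :: s1) ++ (z3 :: s2)).Chain' D := chain'_suf hch1
  have hlink1 := chain'_link hch1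
  have hpre2 : (z2 :: s1).Chain' D := chain'_pre hmid
  have hsuf2 : (z3 :: s2).Chain' D := chain'_suf hmid
  have hlink2 := chain'_link hmid
  -- the three arcs
  have chA1 : ((z1 :: r1) ++ [z2]).Chain' D := by
    rw [chain'_append_iff]
    refine ⟨hpre1, List.isChain_singleton z2, ?_⟩
    intro a ha b hb
    rw [List.head?_cons, Option.mem_def, Option.some_inj] at hb
    subst hb
    exact hlink1 a ha z2 (by simp)
  have chA2 : ((z2 :: s1) ++ [z3]).Chain' D := by
    rw [chain'_append_iff]
    refine ⟨hpre2, List.isChain_singleton z3, ?_⟩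
    intro a ha b hb
    rw [List.head?_cons, Option.mem_def, Option.some_inj] at hb
    subst hb
    exact hlink2 a ha z3 (by simp)
  have chA3 : ((z3 :: s2) ++ [z1]).Chain' D := by
    rw [chain'_append_iff]
    refine ⟨hsuf2, List.isChain_singleton z1, ?_⟩
    intro a ha b hb
    rw [List.head?_cons, Option.mem_def, Option.some_inj] at hb
    subst hb
    obtain ⟨a', ha', b', hb', hR⟩ := hwrap
    rw [List.getLast?_append_of_ne_nil (z1 :: r1 ++ z2 :: s1) (show (z3 :: s2) ≠ [] by simp),
      Option.mem_def] at ha'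
    rw [Option.mem_def] at ha
    rw [ha] at ha'
    rw [Option.some_inj] at ha'
    subst ha'
    have hb'' : b' = z1 := by
      simp only [List.cons_append, List.head?_cons, Option.mem_def, Option.some_inj] at hb'
      exact hb'.symm
    subst hb''
    exact hR
  have dA1 : DipathFromTo D ((z1 :: r1) ++ [z2]) z1 z2 := by
    refine ⟨⟨by simp, chA1, ?_⟩, by simp, List.getLast?_concat⟩
    rw [List.nodup_append']
    refine ⟨List.nodup_cons.mpr ⟨hz1r1, hr1nd⟩, List.nodup_singleton _, ?_⟩
    intro a ha ha'
    rw [List.mem_singleton] at ha'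
    subst ha'
    rcases List.mem_cons.mp ha with h' | h'
    · exact hz12 h'.symm
    · exact hz2r1 h'
  have dA2 : DipathFromTo D ((z2 :: s1) ++ [z3]) z2 z3 := by
    refine ⟨⟨by simp, chA2, ?_⟩, by simp, List.getLast?_concat⟩
    rw [List.nodup_append']
    refine ⟨List.nodup_cons.mpr ⟨hz2s1, hs1nd⟩, List.nodup_singleton _, ?_⟩
    intro a ha ha'
    rw [List.mem_singleton] at ha'
    subst ha'
    rcases List.mem_cons.mp ha with h' | h'
    · exact hz23 h'.symm
    · exact hz3s1 h'
  have dA3 : DipathFromTo D ((z3 :: s2) ++ [z1]) z3 z1 := by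
    refine ⟨⟨by simp, chA3, ?_⟩, by simp, List.getLast?_concat⟩
    rw [List.nodup_append']
    refine ⟨List.nodup_cons.mpr ⟨hz3s2, hs2nd⟩, List.nodup_singleton _, ?_⟩
    intro a ha ha'
    rw [List.mem_singleton] at ha'
    subst ha'
    rcases List.mem_cons.mp ha with h' | h'
    · exact hz13 h'
    · exact hz1s2 h'
  -- interiors of arcs
  have iA1 : interiorL ((z1 :: r1) ++ [z2]) = r1 := by simp [interiorL]
  have iA2 : interiorL ((z2 :: s1) ++ [z3]) = s1 := by simp [interiorL]
  have iA3 : interiorL ((z3 :: s2) ++ [z1]) = s2 := by simp [interiorL]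
  -- Q path facts
  obtain ⟨⟨hQ1ne, hQ1ch, hQ1nd⟩, hQ1h, hQ1la⟩ := hQ1
  obtain ⟨⟨hQ2ne, hQ2ch, hQ2nd⟩, hQ2h, hQ2la⟩ := hQ2
  obtain ⟨⟨hQ3ne, hQ3ch, hQ3nd⟩, hQ3h, hQ3la⟩ := hQ3
  have iQ1 : ∀ x ∈ interiorL Q1, x ≠ z1 ∧ x ≠ z2 ∧ x ≠ z3 ∧ x ≠ v := by
    intro x hx
    have hxQ := mem_of_mem_interiorL hx
    have hxz1 : x ≠ z1 := ne_getLast_of_mem_interiorL hQ1nd hQ1la hx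
    refine ⟨hxz1, ?_, ?_, ne_head_of_mem_interiorL hQ1nd hQ1h hx⟩
    · rintro rfl; exact hxz1 (hQC1 x hxQ ((memL x).mpr (Or.inr (Or.inr (Or.inl rfl)))))
    · rintro rfl; exact hxz1 (hQC1 x hxQ ((memL x).mpr (Or.inr (Or.inr (Or.inr (Or.inr (Or.inl rfl)))))))
  have iQ2 : ∀ x ∈ interiorL Q2, x ≠ z1 ∧ x ≠ z2 ∧ x ≠ z3 ∧ x ≠ v := by
    intro x hx
    have hxQ := mem_of_mem_interiorL hx
    have hxz2 : x ≠ z2 := ne_getLast_of_mem_interiorL hQ2nd hQ2la hx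
    refine ⟨?_, hxz2, ?_, ne_head_of_mem_interiorL hQ2nd hQ2h hx⟩
    · rintro rfl; exact hxz2 (hQC2 x hxQ ((memL x).mpr (Or.inl rfl)))
    · rintro rfl; exact hxz2 (hQC2 x hxQ ((memL x).mpr (Or.inr (Or.inr (Or.inr (Or.inr (Or.inl rfl)))))))
  have iQ3 : ∀ x ∈ interiorL Q3, x ≠ z1 ∧ x ≠ z2 ∧ x ≠ z3 ∧ x ≠ v := by
    intro x hx
    have hxQ := mem_of_mem_interiorL hx
    have hxz3 : x ≠ z3 := ne_getLast_of_mem_interiorL hQ3nd hQ3la hx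
    refine ⟨?_, ?_, hxz3, ne_head_of_mem_interiorL hQ3nd hQ3h hx⟩
    · rintro rfl; exact hxz3 (hQC3 x hxQ ((memL x).mpr (Or.inl rfl)))
    · rintro rfl; exact hxz3 (hQC3 x hxQ ((memL x).mpr (Or.inr (Or.inr (Or.inl rfl)))))
  -- arc vs Q-interior disjointness
  have d14 : ∀ x ∈ r1, x ∉ interiorL Q1 := by
    intro x hx hx'
    have := hQC1 x (mem_of_mem_interiorL hx') ((memL x).mpr (Or.inr (Or.inl hx)))
    subst this; exact hz1r1 hx
  have d15 : ∀ x ∈ r1, x ∉ interiorL Q2 := by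
    intro x hx hx'
    have := hQC2 x (mem_of_mem_interiorL hx') ((memL x).mpr (Or.inr (Or.inl hx)))
    subst this; exact hz2r1 hx
  have d16 : ∀ x ∈ r1, x ∉ interiorL Q3 := by
    intro x hx hx'
    have := hQC3 x (mem_of_mem_interiorL hx') ((memL x).mpr (Or.inr (Or.inl hx)))
    subst this; exact hz3r1 hx
  have d24 : ∀ x ∈ s1, x ∉ interiorL Q1 := by
    intro x hx hx'
    have := hQC1 x (mem_of_mem_interiorL hx') ((memL x).mpr (Or.inr (Or.inr (Or.inr (Or.inl hx)))))
    subst this; exact hz1s1 hx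
  have d25 : ∀ x ∈ s1, x ∉ interiorL Q2 := by
    intro x hx hx'
    have := hQC2 x (mem_of_mem_interiorL hx') ((memL x).mpr (Or.inr (Or.inr (Or.inr (Or.inl hx)))))
    subst this; exact hz2s1 hx
  have d26 : ∀ x ∈ s1, x ∉ interiorL Q3 := by
    intro x hx hx'
    have := hQC3 x (mem_of_mem_interiorL hx') ((memL x).mpr (Or.inr (Or.inr (Or.inr (Or.inl hx)))))
    subst this; exact hz3s1 hx
  have d34 : ∀ x ∈ s2, x ∉ interiorL Q1 := by
    intro x hx hx'
    have := hQC1 x (mem_of_mem_interiorL hx')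
      ((memL x).mpr (Or.inr (Or.inr (Or.inr (Or.inr (Or.inr hx))))))
    subst this; exact hz1s2 hx
  have d35 : ∀ x ∈ s2, x ∉ interiorL Q2 := by
    intro x hx hx'
    have := hQC2 x (mem_of_mem_interiorL hx')
      ((memL x).mpr (Or.inr (Or.inr (Or.inr (Or.inr (Or.inr hx))))))
    subst this; exact hz2s2 hx
  have d36 : ∀ x ∈ s2, x ∉ interiorL Q3 := by
    intro x hx hx'
    have := hQC3 x (mem_of_mem_interiorL hx')
      ((memL x).mpr (Or.inr (Or.inr (Or.inr (Or.inr (Or.inr hx))))))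
    subst this; exact hz3s2 hx
  have d45 : ∀ x ∈ interiorL Q1, x ∉ interiorL Q2 := by
    intro x hx hx'
    exact (iQ1 x hx).2.2.2 (h12 x (mem_of_mem_interiorL hx) (mem_of_mem_interiorL hx'))
  have d46 : ∀ x ∈ interiorL Q1, x ∉ interiorL Q3 := by
    intro x hx hx'
    exact (iQ1 x hx).2.2.2 (h13 x (mem_of_mem_interiorL hx) (mem_of_mem_interiorL hx'))
  have d56 : ∀ x ∈ interiorL Q2, x ∉ interiorL Q3 := by
    intro x hx hx'
    exact (iQ2 x hx).2.2.2 (h23 x (mem_of_mem_interiorL hx) (mem_of_mem_interiorL hx'))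
  -- interior of arcs avoids branch vertices
  have N1 : ∀ x ∈ r1, x ≠ z1 ∧ x ≠ z2 ∧ x ≠ z3 ∧ x ≠ v := by
    intro x hx
    exact ⟨fun h' => hz1r1 (h' ▸ hx), fun h' => hz2r1 (h' ▸ hx), fun h' => hz3r1 (h' ▸ hx),
      fun h' => hvr1 (h' ▸ hx)⟩
  have N2 : ∀ x ∈ s1, x ≠ z1 ∧ x ≠ z2 ∧ x ≠ z3 ∧ x ≠ v := by
    intro x hx
    exact ⟨fun h' => hz1s1 (h' ▸ hx), fun h' => hz2s1 (h' ▸ hx), fun h' => hz3s1 (h' ▸ hx),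
      fun h' => hvs1 (h' ▸ hx)⟩
  have N3 : ∀ x ∈ s2, x ≠ z1 ∧ x ≠ z2 ∧ x ≠ z3 ∧ x ≠ v := by
    intro x hx
    exact ⟨fun h' => hz1s2 (h' ▸ hx), fun h' => hz2s2 (h' ▸ hx), fun h' => hz3s2 (h' ▸ hx),
      fun h' => hvs2 (h' ▸ hx)⟩
  -- now assemble
  refine ⟨wheelBranch z1 z2 z3 v, wheelPaths ((z1 :: r1) ++ [z2]) ((z2 :: s1) ++ [z3])
    ((z3 :: s2) ++ [z1]) Q1 Q2 Q3, ?_, by simp [wheelBranch]⟩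
  have eB0 : wheelBranch z1 z2 z3 v 0 = z1 := by simp [wheelBranch]
  have eB1 : wheelBranch z1 z2 z3 v 1 = z2 := by simp [wheelBranch]
  have eB2 : wheelBranch z1 z2 z3 v 2 = z3 := by simp [wheelBranch]
  have eB3 : wheelBranch z1 z2 z3 v 3 = v := by simp [wheelBranch]
  have e01 : wheelPaths ((z1 :: r1) ++ [z2]) ((z2 :: s1) ++ [z3]) ((z3 :: s2) ++ [z1])
      Q1 Q2 Q3 0 1 = (z1 :: r1) ++ [z2] := by simp [wheelPaths]
  have e12 : wheelPaths ((z1 :: r1) ++ [z2]) ((z2 :: s1) ++ [z3]) ((z3 :: s2) ++ [z1])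
      Q1 Q2 Q3 1 2 = (z2 :: s1) ++ [z3] := by simp [wheelPaths]
  have e20 : wheelPaths ((z1 :: r1) ++ [z2]) ((z2 :: s1) ++ [z3]) ((z3 :: s2) ++ [z1])
      Q1 Q2 Q3 2 0 = (z3 :: s2) ++ [z1] := by simp [wheelPaths]
  have e30 : wheelPaths ((z1 :: r1) ++ [z2]) ((z2 :: s1) ++ [z3]) ((z3 :: s2) ++ [z1])
      Q1 Q2 Q3 3 0 = Q1 := by simp [wheelPaths]
  have e31 : wheelPaths ((z1 :: r1) ++ [z2]) ((z2 :: s1) ++ [z3]) ((z3 :: s2) ++ [z1])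
      Q1 Q2 Q3 3 1 = Q2 := by simp [wheelPaths]
  have e32 : wheelPaths ((z1 :: r1) ++ [z2]) ((z2 :: s1) ++ [z3]) ((z3 :: s2) ++ [z1])
      Q1 Q2 Q3 3 2 = Q3 := by simp [wheelPaths]
  have hvz1' : z1 ≠ v := fun h' => hvz1 h'.symm
  have hvz2' : z2 ≠ v := fun h' => hvz2 h'.symm
  have hvz3' : z3 ≠ v := fun h' => hvz3 h'.symm
  refine ⟨?_, ?_, ?_, ?_⟩
  · -- injectivity
    intro a b hab
    fin_cases a <;> fin_cases b <;> simp [wheelBranch] at hab ⊢ <;>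
      first
        | exact hz12 hab | exact hz13 hab | exact hz23 hab
        | exact hvz1' hab | exact hvz2' hab | exact hvz3' hab
        | exact hz12 hab.symm | exact hz13 hab.symm | exact hz23 hab.symm
        | exact hvz1' hab.symm | exact hvz2' hab.symm | exact hvz3' hab.symm
  · -- dipaths
    intro u w h
    rw [W3_iff] at h
    rcases h with ⟨rfl, rfl⟩ | ⟨rfl, rfl⟩ | ⟨rfl, rfl⟩ | ⟨rfl, rfl⟩ | ⟨rfl, rfl⟩ | ⟨rfl, rfl⟩
    · rw [e01, eB0, eB1]; exact ⟨dA1, by simp⟩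
    · rw [e12, eB1, eB2]; exact ⟨dA2, by simp⟩
    · rw [e20, eB2, eB0]; exact ⟨dA3, by simp⟩
    · rw [e30, eB3, eB0]
      exact ⟨⟨⟨hQ1ne, hQ1ch, hQ1nd⟩, hQ1h, hQ1la⟩, hL1⟩
    · rw [e31, eB3, eB1]
      exact ⟨⟨⟨hQ2ne, hQ2ch, hQ2nd⟩, hQ2h, hQ2la⟩, hL2⟩
    · rw [e32, eB3, eB2]
      exact ⟨⟨⟨hQ3ne, hQ3ch, hQ3nd⟩, hQ3h, hQ3la⟩, hL3⟩
  · -- interiors avoid branch vertices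
    intro u w h
    rw [W3_iff] at h
    have key : ∀ x : V, (x ≠ z1 ∧ x ≠ z2 ∧ x ≠ z3 ∧ x ≠ v) →
        ∀ b : Fin 4, x ≠ wheelBranch z1 z2 z3 v b := by
      intro x hx b
      unfold wheelBranch
      split_ifs
      · exact hx.1
      · exact hx.2.1
      · exact hx.2.2.1
      · exact hx.2.2.2
    rcases h with ⟨rfl, rfl⟩ | ⟨rfl, rfl⟩ | ⟨rfl, rfl⟩ | ⟨rfl, rfl⟩ | ⟨rfl, rfl⟩ | ⟨rfl, rfl⟩
    · rw [e01, iA1]; exact fun x hx => key x (N1 x hx)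
    · rw [e12, iA2]; exact fun x hx => key x (N2 x hx)
    · rw [e20, iA3]; exact fun x hx => key x (N3 x hx)
    · rw [e30]; exact fun x hx => key x (iQ1 x hx)
    · rw [e31]; exact fun x hx => key x (iQ2 x hx)
    · rw [e32]; exact fun x hx => key x (iQ3 x hx)
  · -- pairwise interior disjointness
    intro u w u' w' h h' hne
    rw [W3_iff] at h h'
    rcases h with ⟨rfl, rfl⟩ | ⟨rfl, rfl⟩ | ⟨rfl, rfl⟩ | ⟨rfl, rfl⟩ | ⟨rfl, rfl⟩ | ⟨rfl, rfl⟩ <;>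
      rcases h' with ⟨rfl, rfl⟩ | ⟨rfl, rfl⟩ | ⟨rfl, rfl⟩ | ⟨rfl, rfl⟩ | ⟨rfl, rfl⟩ | ⟨rfl, rfl⟩
    · exact absurd rfl hne
    · rw [e01, e12, iA1, iA2]; exact d12
    · rw [e01, e20, iA1, iA3]; exact d13
    · rw [e01, e30, iA1]; exact d14
    · rw [e01, e31, iA1]; exact d15
    · rw [e01, e32, iA1]; exact d16
    · rw [e12, e01, iA2, iA1]; exact fun x hx hx' => d12 x hx' hx
    · exact absurd rfl hne
    · rw [e12, e20, iA2, iA3]; exact d23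
    · rw [e12, e30, iA2]; exact d24
    · rw [e12, e31, iA2]; exact d25
    · rw [e12, e32, iA2]; exact d26
    · rw [e20, e01, iA3, iA1]; exact fun x hx hx' => d13 x hx' hx
    · rw [e20, e12, iA3, iA2]; exact fun x hx hx' => d23 x hx' hx
    · exact absurd rfl hne
    · rw [e20, e30, iA3]; exact d34
    · rw [e20, e31, iA3]; exact d35
    · rw [e20, e32, iA3]; exact d36
    · rw [e30, e01, iA1]; exact fun x hx hx' => d14 x hx' hx
    · rw [e30, e12, iA2]; exact fun x hx hx' => d24 x hx' hx
    · rw [e30, e20, iA3]; exact fun x hx hx' => d34 x hx' hx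
    · exact absurd rfl hne
    · rw [e30, e31]; exact d45
    · rw [e30, e32]; exact d46
    · rw [e31, e01, iA1]; exact fun x hx hx' => d15 x hx' hx
    · rw [e31, e12, iA2]; exact fun x hx hx' => d25 x hx' hx
    · rw [e31, e20, iA3]; exact fun x hx hx' => d35 x hx' hx
    · rw [e31, e30]; exact fun x hx hx' => d45 x hx' hx
    · exact absurd rfl hne
    · rw [e31, e32]; exact d56
    · rw [e32, e01, iA1]; exact fun x hx hx' => d16 x hx' hx
    · rw [e32, e12, iA2]; exact fun x hx hx' => d26 x hx' hx
    · rw [e32, e20, iA3]; exact fun x hx hx' => d36 x hx' hx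
    · rw [e32, e30]; exact fun x hx hx' => d46 x hx' hx
    · rw [e32, e31]; exact fun x hx hx' => d56 x hx' hx
    · exact absurd rfl hne
end Build
section Bwd
variable {V : Type*}

theorem backward_direction (D : V → V → Prop) (v : V)
    (h : ∃ (Γ : Set V) (w : V), w ≠ v ∧ w ∈ Γ ∧
      Γ = {z | ReachIn D {x | x ≠ v} w z ∧ ReachIn D {x | x ≠ v} z w} ∧
      ∃ x1 x2 x3 : V, x1 ≠ x2 ∧ x1 ≠ x3 ∧ x2 ≠ x3 ∧
        x1 ∈ Γ ∧ x2 ∈ Γ ∧ x3 ∈ Γ ∧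
        (∃ T1 T2 T3 : List V,
          DipathFromTo (restrict D ({z | z ∉ Γ} ∪ {x1, x2, x3})) T1 v x1 ∧
          DipathFromTo (restrict D ({z | z ∉ Γ} ∪ {x1, x2, x3})) T2 v x2 ∧
          DipathFromTo (restrict D ({z | z ∉ Γ} ∪ {x1, x2, x3})) T3 v x3 ∧
          (∀ z, z ∈ T1 → z ∈ T2 → z = v) ∧
          (∀ z, z ∈ T1 → z ∈ T3 → z = v) ∧
          (∀ z, z ∈ T2 → z ∈ T3 → z = v)) ∧
        (∃ C P1 P2 P3 : List V, IsTripod (restrict D Γ) x1 x2 x3 C P1 P2 P3)) :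
    ∃ branch P, IsSubdivisionIn W3 D branch P ∧ branch 3 = v := by
  obtain ⟨Γ, w, hwv, hwΓ, hΓdef, x1, x2, x3, h12, h13, h23, hx1, hx2, hx3,
    ⟨T1, T2, T3, hT1, hT2, hT3, hT12, hT13, hT23⟩,
    ⟨C, P1, P2, P3, hCcyc, hP1, hP2, hP3, hP1h, hP2h, hP3h, hP1l, hP2l, hP3l,
      hd12, hd13, hd23⟩⟩ := h
  -- v is not in Γ
  have hvΓ : v ∉ Γ := by
    rw [hΓdef]
    rintro ⟨-, hr⟩
    rcases (Relation.ReflTransGen.cases_head hr) with h' | ⟨c, hstep, -⟩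
    · exact hwv h'.symm
    · exact hstep.2.1 rfl
  -- the cycle lies in Γ
  have hCΓ : ∀ z ∈ C, z ∈ Γ := mem_A_of_chain'_restrict hCcyc.2.2.1 hCcyc.1
  have hvC : v ∉ C := fun h' => hvΓ (hCΓ v h')
  -- membership in the T-vertex set
  have hSmem : ∀ z, z ∈ ({z | z ∉ Γ} ∪ {x1, x2, x3} : Set V) ↔
      (z ∉ Γ ∨ z = x1 ∨ z = x2 ∨ z = x3) := by
    intro z; simp [Set.mem_union, Set.mem_insert_iff]; tauto
  have hvS : v ∈ ({z | z ∉ Γ} ∪ {x1, x2, x3} : Set V) := (hSmem v).mpr (Or.inl hvΓ)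
  have hT1S : ∀ z ∈ T1, z ∈ ({z | z ∉ Γ} ∪ {x1, x2, x3} : Set V) :=
    mem_A_of_chain'_restrict' hT1.1.2.1 hT1.2.1 hvS
  have hT2S : ∀ z ∈ T2, z ∈ ({z | z ∉ Γ} ∪ {x1, x2, x3} : Set V) :=
    mem_A_of_chain'_restrict' hT2.1.2.1 hT2.2.1 hvS
  have hT3S : ∀ z ∈ T3, z ∈ ({z | z ∉ Γ} ∪ {x1, x2, x3} : Set V) :=
    mem_A_of_chain'_restrict' hT3.1.2.1 hT3.2.1 hvS
  -- process leg 1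
  have he1s : P1.getLast?.isSome := List.getLast?_isSome.mpr hP1.1
  obtain ⟨e1, he1⟩ := Option.isSome_iff_exists.mp he1s
  obtain ⟨a1, y1, b1, hP1eq, hy1C, ha1C⟩ :=
    split_at_first {z | z ∈ C} P1 ⟨e1, mem_getLast? he1, hP1l e1 he1⟩
  have hsub1 : (a1 ++ [y1]) <+ P1 := by
    rw [hP1eq]; exact List.Sublist.append_left ((List.nil_sublist b1).cons₂ y1) a1
  have hL1dip : DipathFromTo (restrict D Γ) (a1 ++ [y1]) x1 y1 := by
    refine ⟨⟨by simp, ?_, hP1.2.2.sublist hsub1⟩, ?_, List.getLast?_concat⟩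
    · have e : P1 = (a1 ++ [y1]) ++ b1 := by rw [hP1eq]; simp
      exact chain'_pre (e ▸ hP1.2.1)
    · have := hP1h
      rw [hP1eq, head?_append_cons] at this
      exact this
  have hL1Γ : ∀ z ∈ a1 ++ [y1], z ∈ Γ :=
    mem_A_of_chain'_restrict' hL1dip.1.2.1 hL1dip.2.1 hx1
  have hL1C : ∀ z ∈ a1 ++ [y1], z ∈ C → z = y1 := by
    intro z hz hzC
    rcases List.mem_append.mp hz with h' | h'
    · exact absurd hzC (ha1C z h')
    · exact List.mem_singleton.mp h'
  have hL1P : ∀ z ∈ a1 ++ [y1], z ∈ P1 := fun z hz => hsub1.subset hz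
  -- process leg 2
  have he2s : P2.getLast?.isSome := List.getLast?_isSome.mpr hP2.1
  obtain ⟨e2, he2⟩ := Option.isSome_iff_exists.mp he2s
  obtain ⟨a2, y2, b2, hP2eq, hy2C, ha2C⟩ :=
    split_at_first {z | z ∈ C} P2 ⟨e2, mem_getLast? he2, hP2l e2 he2⟩
  have hsub2 : (a2 ++ [y2]) <+ P2 := by
    rw [hP2eq]; exact List.Sublist.append_left ((List.nil_sublist b2).cons₂ y2) a2
  have hL2dip : DipathFromTo (restrict D Γ) (a2 ++ [y2]) x2 y2 := by
    refine ⟨⟨by simp, ?_, hP2.2.2.sublist hsub2⟩, ?_, List.getLast?_concat⟩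
    · have e : P2 = (a2 ++ [y2]) ++ b2 := by rw [hP2eq]; simp
      exact chain'_pre (e ▸ hP2.2.1)
    · have := hP2h
      rw [hP2eq, head?_append_cons] at this
      exact this
  have hL2Γ : ∀ z ∈ a2 ++ [y2], z ∈ Γ :=
    mem_A_of_chain'_restrict' hL2dip.1.2.1 hL2dip.2.1 hx2
  have hL2C : ∀ z ∈ a2 ++ [y2], z ∈ C → z = y2 := by
    intro z hz hzC
    rcases List.mem_append.mp hz with h' | h'
    · exact absurd hzC (ha2C z h')
    · exact List.mem_singleton.mp h'
  have hL2P : ∀ z ∈ a2 ++ [y2], z ∈ P2 := fun z hz => hsub2.subset hz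
  -- process leg 3
  have he3s : P3.getLast?.isSome := List.getLast?_isSome.mpr hP3.1
  obtain ⟨e3, he3⟩ := Option.isSome_iff_exists.mp he3s
  obtain ⟨a3, y3, b3, hP3eq, hy3C, ha3C⟩ :=
    split_at_first {z | z ∈ C} P3 ⟨e3, mem_getLast? he3, hP3l e3 he3⟩
  have hsub3 : (a3 ++ [y3]) <+ P3 := by
    rw [hP3eq]; exact List.Sublist.append_left ((List.nil_sublist b3).cons₂ y3) a3
  have hL3dip : DipathFromTo (restrict D Γ) (a3 ++ [y3]) x3 y3 := by
    refine ⟨⟨by simp, ?_, hP3.2.2.sublist hsub3⟩, ?_, List.getLast?_concat⟩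
    · have e : P3 = (a3 ++ [y3]) ++ b3 := by rw [hP3eq]; simp
      exact chain'_pre (e ▸ hP3.2.1)
    · have := hP3h
      rw [hP3eq, head?_append_cons] at this
      exact this
  have hL3Γ : ∀ z ∈ a3 ++ [y3], z ∈ Γ :=
    mem_A_of_chain'_restrict' hL3dip.1.2.1 hL3dip.2.1 hx3
  have hL3C : ∀ z ∈ a3 ++ [y3], z ∈ C → z = y3 := by
    intro z hz hzC
    rcases List.mem_append.mp hz with h' | h'
    · exact absurd hzC (ha3C z h')
    · exact List.mem_singleton.mp h'
  have hL3P : ∀ z ∈ a3 ++ [y3], z ∈ P3 := fun z hz => hsub3.subset hz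
  -- x_i membership in the paths
  have hx1P1 : x1 ∈ P1 := mem_head? hP1h
  have hx2P2 : x2 ∈ P2 := mem_head? hP2h
  have hx3P3 : x3 ∈ P3 := mem_head? hP3h
  have hx1T1 : x1 ∈ T1 := mem_getLast? hT1.2.2
  have hx2T2 : x2 ∈ T2 := mem_getLast? hT2.2.2
  have hx3T3 : x3 ∈ T3 := mem_getLast? hT3.2.2
  -- meets between T_i and leg i
  have meet1 : ∀ a ∈ T1, a ∈ a1 ++ [y1] → a = x1 := by
    intro a ha hal
    rcases (hSmem a).mp (hT1S a ha) with h' | h' | h' | h'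
    · exact absurd (hL1Γ a hal) h'
    · exact h'
    · subst h'; exact absurd hx2P2 (fun hh => hd12 a (hL1P a hal) hh)
    · subst h'; exact absurd (hL1P a hal) (fun hh => hd13 a hh hx3P3)
  have meet2 : ∀ a ∈ T2, a ∈ a2 ++ [y2] → a = x2 := by
    intro a ha hal
    rcases (hSmem a).mp (hT2S a ha) with h' | h' | h' | h'
    · exact absurd (hL2Γ a hal) h'
    · subst h'; exact absurd (hL2P a hal) (fun hh => hd12 a hx1P1 hh)
    · exact h'
    · subst h'; exact absurd (hL2P a hal) (fun hh => hd23 a hh hx3P3)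
  have meet3 : ∀ a ∈ T3, a ∈ a3 ++ [y3] → a = x3 := by
    intro a ha hal
    rcases (hSmem a).mp (hT3S a ha) with h' | h' | h' | h'
    · exact absurd (hL3Γ a hal) h'
    · subst h'; exact absurd (hL3P a hal) (fun hh => hd13 a hx1P1 hh)
    · subst h'; exact absurd (hL3P a hal) (fun hh => hd23 a hx2P2 hh)
    · exact h'
  -- combined centre paths
  have hQ1 : DipathFromTo D (T1 ++ (a1 ++ [y1]).tail) v y1 :=
    dipath_concat (dipath_weaken hT1) (dipath_weaken hL1dip) meet1
  have hQ2 : DipathFromTo D (T2 ++ (a2 ++ [y2]).tail) v y2 :=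
    dipath_concat (dipath_weaken hT2) (dipath_weaken hL2dip) meet2
  have hQ3 : DipathFromTo D (T3 ++ (a3 ++ [y3]).tail) v y3 :=
    dipath_concat (dipath_weaken hT3) (dipath_weaken hL3dip) meet3
  have hy1Γ : y1 ∈ Γ := hL1Γ y1 (by simp)
  have hy2Γ : y2 ∈ Γ := hL2Γ y2 (by simp)
  have hy3Γ : y3 ∈ Γ := hL3Γ y3 (by simp)
  have hvy1 : v ≠ y1 := fun h' => hvΓ (h' ▸ hy1Γ)
  have hvy2 : v ≠ y2 := fun h' => hvΓ (h' ▸ hy2Γ)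
  have hvy3 : v ≠ y3 := fun h' => hvΓ (h' ▸ hy3Γ)
  have hQ1len : 2 ≤ (T1 ++ (a1 ++ [y1]).tail).length := two_le_length_of_dipath hQ1 hvy1
  have hQ2len : 2 ≤ (T2 ++ (a2 ++ [y2]).tail).length := two_le_length_of_dipath hQ2 hvy2
  have hQ3len : 2 ≤ (T3 ++ (a3 ++ [y3]).tail).length := two_le_length_of_dipath hQ3 hvy3
  have memQ1 : ∀ z ∈ T1 ++ (a1 ++ [y1]).tail, z ∈ T1 ∨ z ∈ a1 ++ [y1] := by
    intro z hz
    rcases List.mem_append.mp hz with h' | h'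
    · exact Or.inl h'
    · exact Or.inr (List.mem_of_mem_tail h')
  have memQ2 : ∀ z ∈ T2 ++ (a2 ++ [y2]).tail, z ∈ T2 ∨ z ∈ a2 ++ [y2] := by
    intro z hz
    rcases List.mem_append.mp hz with h' | h'
    · exact Or.inl h'
    · exact Or.inr (List.mem_of_mem_tail h')
  have memQ3 : ∀ z ∈ T3 ++ (a3 ++ [y3]).tail, z ∈ T3 ∨ z ∈ a3 ++ [y3] := by
    intro z hz
    rcases List.mem_append.mp hz with h' | h'
    · exact Or.inl h'
    · exact Or.inr (List.mem_of_mem_tail h')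
  -- T_i cannot meet the leg of a different index
  have TL12 : ∀ z ∈ T1, z ∈ a2 ++ [y2] → False := by
    intro z hz hzl
    rcases (hSmem z).mp (hT1S z hz) with h' | h' | h' | h'
    · exact h' (hL2Γ z hzl)
    · subst h'; exact hd12 z hx1P1 (hL2P z hzl)
    · subst h'; exact hvΓ ((hT12 z hz hx2T2) ▸ hx2)
    · subst h'; exact hd23 z (hL2P z hzl) hx3P3
  have TL13 : ∀ z ∈ T1, z ∈ a3 ++ [y3] → False := by
    intro z hz hzl
    rcases (hSmem z).mp (hT1S z hz) with h' | h' | h' | h'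
    · exact h' (hL3Γ z hzl)
    · subst h'; exact hd13 z hx1P1 (hL3P z hzl)
    · subst h'; exact hd23 z hx2P2 (hL3P z hzl)
    · subst h'; exact hvΓ ((hT13 z hz hx3T3) ▸ hx3)
  have TL21 : ∀ z ∈ T2, z ∈ a1 ++ [y1] → False := by
    intro z hz hzl
    rcases (hSmem z).mp (hT2S z hz) with h' | h' | h' | h'
    · exact h' (hL1Γ z hzl)
    · subst h'; exact hvΓ ((hT12 z hx1T1 hz) ▸ hx1)
    · subst h'; exact hd12 z (hL1P z hzl) hx2P2
    · subst h'; exact hd13 z (hL1P z hzl) hx3P3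
  have TL23 : ∀ z ∈ T2, z ∈ a3 ++ [y3] → False := by
    intro z hz hzl
    rcases (hSmem z).mp (hT2S z hz) with h' | h' | h' | h'
    · exact h' (hL3Γ z hzl)
    · subst h'; exact hd13 z hx1P1 (hL3P z hzl)
    · subst h'; exact hd23 z hx2P2 (hL3P z hzl)
    · subst h'; exact hvΓ ((hT23 z hz hx3T3) ▸ hx3)
  have TL31 : ∀ z ∈ T3, z ∈ a1 ++ [y1] → False := by
    intro z hz hzl
    rcases (hSmem z).mp (hT3S z hz) with h' | h' | h' | h'
    · exact h' (hL1Γ z hzl)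
    · subst h'; exact hvΓ ((hT13 z hx1T1 hz) ▸ hx1)
    · subst h'; exact hd12 z (hL1P z hzl) hx2P2
    · subst h'; exact hd13 z (hL1P z hzl) hx3P3
  have TL32 : ∀ z ∈ T3, z ∈ a2 ++ [y2] → False := by
    intro z hz hzl
    rcases (hSmem z).mp (hT3S z hz) with h' | h' | h' | h'
    · exact h' (hL2Γ z hzl)
    · subst h'; exact hd12 z hx1P1 (hL2P z hzl)
    · subst h'; exact hvΓ ((hT23 z hx2T2 hz) ▸ hx2)
    · subst h'; exact hd23 z (hL2P z hzl) hx3P3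
  -- pairwise meets of the Q's
  have M12 : ∀ z ∈ T1 ++ (a1 ++ [y1]).tail, z ∈ T2 ++ (a2 ++ [y2]).tail → z = v := by
    intro z hz hz'
    rcases memQ1 z hz with h' | h' <;> rcases memQ2 z hz' with h'' | h''
    · exact hT12 z h' h''
    · exact absurd (TL12 z h' h'') (by simp)
    · exact absurd (TL21 z h'' h') (by simp)
    · exact absurd (hL2P z h'') (hd12 z (hL1P z h'))
  have M13 : ∀ z ∈ T1 ++ (a1 ++ [y1]).tail, z ∈ T3 ++ (a3 ++ [y3]).tail → z = v := by
    intro z hz hz'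
    rcases memQ1 z hz with h' | h' <;> rcases memQ3 z hz' with h'' | h''
    · exact hT13 z h' h''
    · exact absurd (TL13 z h' h'') (by simp)
    · exact absurd (TL31 z h'' h') (by simp)
    · exact absurd (hL3P z h'') (hd13 z (hL1P z h'))
  have M23 : ∀ z ∈ T2 ++ (a2 ++ [y2]).tail, z ∈ T3 ++ (a3 ++ [y3]).tail → z = v := by
    intro z hz hz'
    rcases memQ2 z hz with h' | h' <;> rcases memQ3 z hz' with h'' | h''
    · exact hT23 z h' h''
    · exact absurd (TL23 z h' h'') (by simp)
    · exact absurd (TL32 z h'' h') (by simp)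
    · exact absurd (hL3P z h'') (hd23 z (hL2P z h'))
  -- Q's meet the cycle only at the attachment point
  have HQC1 : ∀ z ∈ T1 ++ (a1 ++ [y1]).tail, z ∈ C → z = y1 := by
    intro z hz hzC
    rcases memQ1 z hz with h' | h'
    · rcases (hSmem z).mp (hT1S z h') with h'' | h'' | h'' | h''
      · exact absurd (hCΓ z hzC) h''
      · subst h''
        exact hL1C z (mem_head? hL1dip.2.1) hzC
      · subst h''; exact absurd ((hT12 z h' hx2T2) ▸ hx2) hvΓ
      · subst h''; exact absurd ((hT13 z h' hx3T3) ▸ hx3) hvΓ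
    · exact hL1C z h' hzC
  have HQC2 : ∀ z ∈ T2 ++ (a2 ++ [y2]).tail, z ∈ C → z = y2 := by
    intro z hz hzC
    rcases memQ2 z hz with h' | h'
    · rcases (hSmem z).mp (hT2S z h') with h'' | h'' | h'' | h''
      · exact absurd (hCΓ z hzC) h''
      · subst h''; exact absurd ((hT12 z hx1T1 h') ▸ hx1) hvΓ
      · subst h''
        exact hL2C z (mem_head? hL2dip.2.1) hzC
      · subst h''; exact absurd ((hT23 z h' hx3T3) ▸ hx3) hvΓ
    · exact hL2C z h' hzC
  have HQC3 : ∀ z ∈ T3 ++ (a3 ++ [y3]).tail, z ∈ C → z = y3 := by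
    intro z hz hzC
    rcases memQ3 z hz with h' | h'
    · rcases (hSmem z).mp (hT3S z h') with h'' | h'' | h'' | h''
      · exact absurd (hCΓ z hzC) h''
      · subst h''; exact absurd ((hT13 z hx1T1 h') ▸ hx1) hvΓ
      · subst h''; exact absurd ((hT23 z hx2T2 h') ▸ hx2) hvΓ
      · subst h''
        exact hL3C z (mem_head? hL3dip.2.1) hzC
    · exact hL3C z h' hzC
  -- attachment points are distinct
  have hy12 : y1 ≠ y2 := by
    intro h'
    exact hd12 y1 (hL1P y1 (by simp)) (by rw [h']; exact hL2P y2 (by simp))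
  have hy13 : y1 ≠ y3 := by
    intro h'
    exact hd13 y1 (hL1P y1 (by simp)) (by rw [h']; exact hL3P y3 (by simp))
  have hy23 : y2 ≠ y3 := by
    intro h'
    exact hd23 y2 (hL2P y2 (by simp)) (by rw [h']; exact hL3P y3 (by simp))
  -- split the cycle and build
  have hCD : IsDicycle D C := dicycle_weaken hCcyc
  rcases cycle_three_split hCD hy1C hy2C hy3C hy12 hy13 hy23 with
    ⟨r1, s1, s2, hcyc', hmem'⟩ | ⟨r1, s1, s2, hcyc', hmem'⟩
  · exact build_subdivision hcyc' (fun h' => hvC ((hmem' v).mp h')) hQ1 hQ2 hQ3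
      hQ1len hQ2len hQ3len M12 M13 M23
      (fun z hz hzL => HQC1 z hz ((hmem' z).mp hzL))
      (fun z hz hzL => HQC2 z hz ((hmem' z).mp hzL))
      (fun z hz hzL => HQC3 z hz ((hmem' z).mp hzL))
  · exact build_subdivision hcyc' (fun h' => hvC ((hmem' v).mp h')) hQ1 hQ3 hQ2
      hQ1len hQ3len hQ2len M13 M12 (fun z hz hz' => M23 z hz' hz)
      (fun z hz hzL => HQC1 z hz ((hmem' z).mp hzL))
      (fun z hz hzL => HQC3 z hz ((hmem' z).mp hzL))
      (fun z hz hzL => HQC2 z hz ((hmem' z).mp hzL))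
end Bwd
section Fwd
variable {V : Type*}

theorem forward_direction (D : V → V → Prop) (v : V)
    (h : ∃ branch P, IsSubdivisionIn W3 D branch P ∧ branch 3 = v) :
    ∃ (Γ : Set V) (w : V), w ≠ v ∧ w ∈ Γ ∧
      Γ = {z | ReachIn D {x | x ≠ v} w z ∧ ReachIn D {x | x ≠ v} z w} ∧
      ∃ x1 x2 x3 : V, x1 ≠ x2 ∧ x1 ≠ x3 ∧ x2 ≠ x3 ∧
        x1 ∈ Γ ∧ x2 ∈ Γ ∧ x3 ∈ Γ ∧
        (∃ T1 T2 T3 : List V,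
          DipathFromTo (restrict D ({z | z ∉ Γ} ∪ {x1, x2, x3})) T1 v x1 ∧
          DipathFromTo (restrict D ({z | z ∉ Γ} ∪ {x1, x2, x3})) T2 v x2 ∧
          DipathFromTo (restrict D ({z | z ∉ Γ} ∪ {x1, x2, x3})) T3 v x3 ∧
          (∀ z, z ∈ T1 → z ∈ T2 → z = v) ∧
          (∀ z, z ∈ T1 → z ∈ T3 → z = v) ∧
          (∀ z, z ∈ T2 → z ∈ T3 → z = v)) ∧
        (∃ C P1 P2 P3 : List V, IsTripod (restrict D Γ) x1 x2 x3 C P1 P2 P3) := by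
  obtain ⟨branch, P, ⟨hinj, harc, hint, hdisj⟩, hb3⟩ := h
  subst hb3
  have w01 : W3 0 1 := by unfold W3; decide
  have w12 : W3 1 2 := by unfold W3; decide
  have w20 : W3 2 0 := by unfold W3; decide
  have w30 : W3 3 0 := by unfold W3; decide
  have w31 : W3 3 1 := by unfold W3; decide
  have w32 : W3 3 2 := by unfold W3; decide
  have d01 := (harc 0 1 w01).1
  have d12 := (harc 1 2 w12).1
  have d20 := (harc 2 0 w20).1
  have d30 := (harc 3 0 w30).1
  have d31 := (harc 3 1 w31).1
  have d32 := (harc 3 2 w32).1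
  have i01 := hint 0 1 w01
  have i12 := hint 1 2 w12
  have i20 := hint 2 0 w20
  have i30 := hint 3 0 w30
  have i31 := hint 3 1 w31
  have i32 := hint 3 2 w32
  have hne01 : branch 0 ≠ branch 1 := fun h' => absurd (hinj h') (by decide)
  have hne02 : branch 0 ≠ branch 2 := fun h' => absurd (hinj h') (by decide)
  have hne03 : branch 0 ≠ branch 3 := fun h' => absurd (hinj h') (by decide)
  have hne12 : branch 1 ≠ branch 2 := fun h' => absurd (hinj h') (by decide)
  have hne13 : branch 1 ≠ branch 3 := fun h' => absurd (hinj h') (by decide)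
  have hne23 : branch 2 ≠ branch 3 := fun h' => absurd (hinj h') (by decide)
  -- meets between the six subdivision paths
  have M0112 : ∀ z ∈ P 0 1, z ∈ P 1 2 → z = branch 1 := by
    intro z hz hz'
    obtain ⟨c1, c2⟩ := dipath_meet d01 d12 (fun x hx => ⟨i01 x hx 1, i01 x hx 2⟩)
      (fun x hx => ⟨i12 x hx 0, i12 x hx 1⟩) (hdisj 0 1 1 2 w01 w12 (by decide)) z hz hz'
    rcases c1 with rfl | rfl
    · rcases c2 with h' | h'
      · exact absurd h' hne01
      · exact absurd h' hne02
    · rfl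
  have M0120 : ∀ z ∈ P 0 1, z ∈ P 2 0 → z = branch 0 := by
    intro z hz hz'
    obtain ⟨c1, c2⟩ := dipath_meet d01 d20 (fun x hx => ⟨i01 x hx 2, i01 x hx 0⟩)
      (fun x hx => ⟨i20 x hx 0, i20 x hx 1⟩) (hdisj 0 1 2 0 w01 w20 (by decide)) z hz hz'
    rcases c1 with rfl | rfl
    · rfl
    · rcases c2 with h' | h'
      · exact absurd h' hne12
      · exact absurd h'.symm hne01
  have M1220 : ∀ z ∈ P 1 2, z ∈ P 2 0 → z = branch 2 := by
    intro z hz hz'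
    obtain ⟨c1, c2⟩ := dipath_meet d12 d20 (fun x hx => ⟨i12 x hx 2, i12 x hx 0⟩)
      (fun x hx => ⟨i20 x hx 1, i20 x hx 2⟩) (hdisj 1 2 2 0 w12 w20 (by decide)) z hz hz'
    rcases c1 with rfl | rfl
    · rcases c2 with h' | h'
      · exact absurd h' hne12
      · exact absurd h'.symm hne01
    · rfl
  have M3031 : ∀ z ∈ P 3 0, z ∈ P 3 1 → z = branch 3 := by
    intro z hz hz'
    obtain ⟨c1, c2⟩ := dipath_meet d30 d31 (fun x hx => ⟨i30 x hx 3, i30 x hx 1⟩)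
      (fun x hx => ⟨i31 x hx 3, i31 x hx 0⟩) (hdisj 3 0 3 1 w30 w31 (by decide)) z hz hz'
    rcases c1 with rfl | rfl
    · rfl
    · rcases c2 with h' | h'
      · exact absurd h' hne03
      · exact absurd h' hne01
  have M3032 : ∀ z ∈ P 3 0, z ∈ P 3 2 → z = branch 3 := by
    intro z hz hz'
    obtain ⟨c1, c2⟩ := dipath_meet d30 d32 (fun x hx => ⟨i30 x hx 3, i30 x hx 2⟩)
      (fun x hx => ⟨i32 x hx 3, i32 x hx 0⟩) (hdisj 3 0 3 2 w30 w32 (by decide)) z hz hz'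
    rcases c1 with rfl | rfl
    · rfl
    · rcases c2 with h' | h'
      · exact absurd h' hne03
      · exact absurd h' hne02
  have M3132 : ∀ z ∈ P 3 1, z ∈ P 3 2 → z = branch 3 := by
    intro z hz hz'
    obtain ⟨c1, c2⟩ := dipath_meet d31 d32 (fun x hx => ⟨i31 x hx 3, i31 x hx 2⟩)
      (fun x hx => ⟨i32 x hx 3, i32 x hx 1⟩) (hdisj 3 1 3 2 w31 w32 (by decide)) z hz hz'
    rcases c1 with rfl | rfl
    · rfl
    · rcases c2 with h' | h'
      · exact absurd h' hne13
      · exact absurd h' hne12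
  -- the cycle of the subdivision
  have hQ : DipathFromTo D (P 0 1 ++ (P 1 2).tail) (branch 0) (branch 2) :=
    dipath_concat d01 d12 M0112
  have hmeetQ : ∀ z ∈ P 0 1 ++ (P 1 2).tail, z ∈ P 2 0 → z = branch 0 ∨ z = branch 2 := by
    intro z hz hz'
    rcases List.mem_append.mp hz with h' | h'
    · exact Or.inl (M0120 z h' hz')
    · exact Or.inr (M1220 z (List.mem_of_mem_tail h') hz')
  have hC0 : IsDicycle D (P 0 1 ++ (P 1 2).tail ++ interiorL (P 2 0)) :=
    dicycle_of_two_dipaths hQ d20 hne02 hmeetQ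
  have hu0C : branch 0 ∈ P 0 1 ++ (P 1 2).tail ++ interiorL (P 2 0) :=
    List.mem_append.mpr (Or.inl (List.mem_append.mpr (Or.inl (mem_head? d01.2.1))))
  have hu1C : branch 1 ∈ P 0 1 ++ (P 1 2).tail ++ interiorL (P 2 0) :=
    List.mem_append.mpr (Or.inl (List.mem_append.mpr (Or.inl (mem_getLast? d01.2.2))))
  have hu2C : branch 2 ∈ P 0 1 ++ (P 1 2).tail ++ interiorL (P 2 0) :=
    List.mem_append.mpr (Or.inl (mem_getLast? hQ.2.2))
  have hC0v : ∀ z ∈ P 0 1 ++ (P 1 2).tail ++ interiorL (P 2 0), z ≠ branch 3 := by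
    intro z hz
    rcases List.mem_append.mp hz with hz' | hz'
    · rcases List.mem_append.mp hz' with h1 | h1
      · rcases mem_decomp d01.2.1 d01.2.2 h1 with rfl | hzi | rfl
        · exact hne03
        · exact i01 z hzi 3
        · exact hne13
      · rcases mem_decomp d12.2.1 d12.2.2 (List.mem_of_mem_tail h1) with rfl | hzi | rfl
        · exact hne13
        · exact i12 z hzi 3
        · exact hne23
    · exact i20 z hz' 3
  have hC0R : IsDicycle (restrict D {x | x ≠ branch 3})
      (P 0 1 ++ (P 1 2).tail ++ interiorL (P 2 0)) :=
    dicycle_restrict hC0 hC0v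
  have hC0Γ : ∀ z ∈ P 0 1 ++ (P 1 2).tail ++ interiorL (P 2 0),
      z ∈ {z | ReachIn D {x | x ≠ branch 3} (branch 0) z ∧
        ReachIn D {x | x ≠ branch 3} z (branch 0)} := by
    intro z hz
    exact ⟨dicycle_reach hC0R hu0C hz, dicycle_reach hC0R hz hu0C⟩
  have hvΓ : branch 3 ∉ {z | ReachIn D {x | x ≠ branch 3} (branch 0) z ∧
      ReachIn D {x | x ≠ branch 3} z (branch 0)} := by
    rintro ⟨-, hr⟩
    rcases Relation.ReflTransGen.cases_head hr with h' | ⟨c, hstep, -⟩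
    · exact hne03 h'.symm
    · exact hstep.2.1 rfl
  -- split the three centre paths at their first Γ-vertex
  obtain ⟨a0, x0, b0, hT0eq, hx0Γ, ha0Γ⟩ := split_at_first _ (P 3 0)
    ⟨branch 0, mem_getLast? d30.2.2, hC0Γ _ hu0C⟩
  obtain ⟨a1, x1, b1, hT1eq, hx1Γ, ha1Γ⟩ := split_at_first _ (P 3 1)
    ⟨branch 1, mem_getLast? d31.2.2, hC0Γ _ hu1C⟩
  obtain ⟨a2, x2, b2, hT2eq, hx2Γ, ha2Γ⟩ := split_at_first _ (P 3 2)
    ⟨branch 2, mem_getLast? d32.2.2, hC0Γ _ hu2C⟩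
  have hsubT0 : (a0 ++ [x0]) <+ P 3 0 := by
    rw [hT0eq]; exact List.Sublist.append_left ((List.nil_sublist b0).cons₂ x0) a0
  have hsubT1 : (a1 ++ [x1]) <+ P 3 1 := by
    rw [hT1eq]; exact List.Sublist.append_left ((List.nil_sublist b1).cons₂ x1) a1
  have hsubT2 : (a2 ++ [x2]) <+ P 3 2 := by
    rw [hT2eq]; exact List.Sublist.append_left ((List.nil_sublist b2).cons₂ x2) a2
  have hsubL0 : (x0 :: b0) <+ P 3 0 := by rw [hT0eq]; exact List.sublist_append_right a0 _
  have hsubL1 : (x1 :: b1) <+ P 3 1 := by rw [hT1eq]; exact List.sublist_append_right a1 _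
  have hsubL2 : (x2 :: b2) <+ P 3 2 := by rw [hT2eq]; exact List.sublist_append_right a2 _
  have hx0ne3 : x0 ≠ branch 3 := fun e => hvΓ (e ▸ hx0Γ)
  have hx1ne3 : x1 ≠ branch 3 := fun e => hvΓ (e ▸ hx1Γ)
  have hx2ne3 : x2 ≠ branch 3 := fun e => hvΓ (e ▸ hx2Γ)
  -- the centre vertex is not on the legs
  have hvL0 : branch 3 ∉ (x0 :: b0) := by
    cases a0 with
    | nil =>
      have hh := d30.2.1
      rw [hT0eq, List.nil_append, List.head?_cons, Option.some_inj] at hh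
      exact absurd hh hx0ne3
    | cons g a0' =>
      intro hmem
      have hh := d30.2.1
      rw [hT0eq, List.cons_append, List.head?_cons, Option.some_inj] at hh
      have hnd := d30.1.2.2
      rw [hT0eq, List.cons_append] at hnd
      exact (List.nodup_cons.mp hnd).1
        (List.mem_append.mpr (Or.inr (hh ▸ hmem)))
  have hvL1 : branch 3 ∉ (x1 :: b1) := by
    cases a1 with
    | nil =>
      have hh := d31.2.1
      rw [hT1eq, List.nil_append, List.head?_cons, Option.some_inj] at hh
      exact absurd hh hx1ne3
    | cons g a1' =>
      intro hmem
      have hh := d31.2.1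
      rw [hT1eq, List.cons_append, List.head?_cons, Option.some_inj] at hh
      have hnd := d31.1.2.2
      rw [hT1eq, List.cons_append] at hnd
      exact (List.nodup_cons.mp hnd).1
        (List.mem_append.mpr (Or.inr (hh ▸ hmem)))
  have hvL2 : branch 3 ∉ (x2 :: b2) := by
    cases a2 with
    | nil =>
      have hh := d32.2.1
      rw [hT2eq, List.nil_append, List.head?_cons, Option.some_inj] at hh
      exact absurd hh hx2ne3
    | cons g a2' =>
      intro hmem
      have hh := d32.2.1
      rw [hT2eq, List.cons_append, List.head?_cons, Option.some_inj] at hh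
      have hnd := d32.1.2.2
      rw [hT2eq, List.cons_append] at hnd
      exact (List.nodup_cons.mp hnd).1
        (List.mem_append.mpr (Or.inr (hh ▸ hmem)))
  -- the legs lie in Γ
  have hL0chD : (x0 :: b0).Chain' D := chain'_suf (hT0eq ▸ d30.1.2.1)
  have hL1chD : (x1 :: b1).Chain' D := chain'_suf (hT1eq ▸ d31.1.2.1)
  have hL2chD : (x2 :: b2).Chain' D := chain'_suf (hT2eq ▸ d32.1.2.1)
  have hL0last : (x0 :: b0).getLast? = some (branch 0) := by
    have := d30.2.2
    rwa [hT0eq, List.getLast?_append_of_ne_nil a0 (by simp)] at this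
  have hL1last : (x1 :: b1).getLast? = some (branch 1) := by
    have := d31.2.2
    rwa [hT1eq, List.getLast?_append_of_ne_nil a1 (by simp)] at this
  have hL2last : (x2 :: b2).getLast? = some (branch 2) := by
    have := d32.2.2
    rwa [hT2eq, List.getLast?_append_of_ne_nil a2 (by simp)] at this
  have hL0chR : (x0 :: b0).Chain' (restrict D {x | x ≠ branch 3}) :=
    chain'_restrict_of_subset hL0chD (fun z hz e => hvL0 (e ▸ hz))
  have hL1chR : (x1 :: b1).Chain' (restrict D {x | x ≠ branch 3}) :=
    chain'_restrict_of_subset hL1chD (fun z hz e => hvL1 (e ▸ hz))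
  have hL2chR : (x2 :: b2).Chain' (restrict D {x | x ≠ branch 3}) :=
    chain'_restrict_of_subset hL2chD (fun z hz e => hvL2 (e ▸ hz))
  have hL0Γ : ∀ z ∈ x0 :: b0, z ∈ {z | ReachIn D {x | x ≠ branch 3} (branch 0) z ∧
      ReachIn D {x | x ≠ branch 3} z (branch 0)} := by
    intro z hz
    exact ⟨hx0Γ.1.trans (reach_of_head_chain' hL0chR (by simp) hz),
      reach_getLast_of_chain' hL0chR hz (branch 0) hL0last⟩
  have hL1Γ : ∀ z ∈ x1 :: b1, z ∈ {z | ReachIn D {x | x ≠ branch 3} (branch 0) z ∧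
      ReachIn D {x | x ≠ branch 3} z (branch 0)} := by
    intro z hz
    refine ⟨hx1Γ.1.trans (reach_of_head_chain' hL1chR (by simp) hz), ?_⟩
    exact (reach_getLast_of_chain' hL1chR hz (branch 1) hL1last).trans
      (dicycle_reach hC0R hu1C hu0C)
  have hL2Γ : ∀ z ∈ x2 :: b2, z ∈ {z | ReachIn D {x | x ≠ branch 3} (branch 0) z ∧
      ReachIn D {x | x ≠ branch 3} z (branch 0)} := by
    intro z hz
    refine ⟨hx2Γ.1.trans (reach_of_head_chain' hL2chR (by simp) hz), ?_⟩
    exact (reach_getLast_of_chain' hL2chR hz (branch 2) hL2last).trans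
      (dicycle_reach hC0R hu2C hu0C)
  -- distinctness of the x's
  have hx01 : x0 ≠ x1 := by
    intro e
    exact hx0ne3 (M3031 x0 (hsubT0.subset (by simp)) (by rw [e]; exact hsubT1.subset (by simp)))
  have hx02 : x0 ≠ x2 := by
    intro e
    exact hx0ne3 (M3032 x0 (hsubT0.subset (by simp)) (by rw [e]; exact hsubT2.subset (by simp)))
  have hx12 : x1 ≠ x2 := by
    intro e
    exact hx1ne3 (M3132 x1 (hsubT1.subset (by simp)) (by rw [e]; exact hsubT2.subset (by simp)))
  -- the truncated centre paths
  have hT0'dip : DipathFromTo (restrict D ({z | z ∉ {z | ReachIn D {x | x ≠ branch 3}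
      (branch 0) z ∧ ReachIn D {x | x ≠ branch 3} z (branch 0)}} ∪ {x0, x1, x2}))
      (a0 ++ [x0]) (branch 3) x0 := by
    refine ⟨⟨by simp, ?_, d30.1.2.2.sublist hsubT0⟩, ?_, List.getLast?_concat⟩
    · have e' : P 3 0 = (a0 ++ [x0]) ++ b0 := by rw [hT0eq]; simp
      refine chain'_restrict_of_subset (chain'_pre (e' ▸ d30.1.2.1)) ?_
      intro z hz
      rcases List.mem_append.mp hz with h' | h'
      · exact Or.inl (ha0Γ z h')
      · rw [List.mem_singleton] at h'
        subst h'
        exact Or.inr (by simp)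
    · have hh := d30.2.1
      rwa [hT0eq, head?_append_cons] at hh
  have hT1'dip : DipathFromTo (restrict D ({z | z ∉ {z | ReachIn D {x | x ≠ branch 3}
      (branch 0) z ∧ ReachIn D {x | x ≠ branch 3} z (branch 0)}} ∪ {x0, x1, x2}))
      (a1 ++ [x1]) (branch 3) x1 := by
    refine ⟨⟨by simp, ?_, d31.1.2.2.sublist hsubT1⟩, ?_, List.getLast?_concat⟩
    · have e' : P 3 1 = (a1 ++ [x1]) ++ b1 := by rw [hT1eq]; simp
      refine chain'_restrict_of_subset (chain'_pre (e' ▸ d31.1.2.1)) ?_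
      intro z hz
      rcases List.mem_append.mp hz with h' | h'
      · exact Or.inl (ha1Γ z h')
      · rw [List.mem_singleton] at h'
        subst h'
        exact Or.inr (by simp)
    · have hh := d31.2.1
      rwa [hT1eq, head?_append_cons] at hh
  have hT2'dip : DipathFromTo (restrict D ({z | z ∉ {z | ReachIn D {x | x ≠ branch 3}
      (branch 0) z ∧ ReachIn D {x | x ≠ branch 3} z (branch 0)}} ∪ {x0, x1, x2}))
      (a2 ++ [x2]) (branch 3) x2 := by
    refine ⟨⟨by simp, ?_, d32.1.2.2.sublist hsubT2⟩, ?_, List.getLast?_concat⟩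
    · have e' : P 3 2 = (a2 ++ [x2]) ++ b2 := by rw [hT2eq]; simp
      refine chain'_restrict_of_subset (chain'_pre (e' ▸ d32.1.2.1)) ?_
      intro z hz
      rcases List.mem_append.mp hz with h' | h'
      · exact Or.inl (ha2Γ z h')
      · rw [List.mem_singleton] at h'
        subst h'
        exact Or.inr (by simp)
    · have hh := d32.2.1
      rwa [hT2eq, head?_append_cons] at hh
  -- assemble
  refine ⟨{z | ReachIn D {x | x ≠ branch 3} (branch 0) z ∧
      ReachIn D {x | x ≠ branch 3} z (branch 0)}, branch 0, hne03, ?_, rfl,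
    x0, x1, x2, hx01, hx02, hx12, hx0Γ, hx1Γ, hx2Γ,
    ⟨a0 ++ [x0], a1 ++ [x1], a2 ++ [x2], hT0'dip, hT1'dip, hT2'dip, ?_, ?_, ?_⟩,
    ⟨P 0 1 ++ (P 1 2).tail ++ interiorL (P 2 0), x0 :: b0, x1 :: b1, x2 :: b2,
      dicycle_restrict hC0 hC0Γ,
      ⟨by simp, chain'_restrict_of_subset hL0chD hL0Γ, d30.1.2.2.sublist hsubL0⟩,
      ⟨by simp, chain'_restrict_of_subset hL1chD hL1Γ, d31.1.2.2.sublist hsubL1⟩,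
      ⟨by simp, chain'_restrict_of_subset hL2chD hL2Γ, d32.1.2.2.sublist hsubL2⟩,
      by simp, by simp, by simp, ?_, ?_, ?_, ?_, ?_, ?_⟩⟩
  · exact ⟨Relation.ReflTransGen.refl, Relation.ReflTransGen.refl⟩
  · exact fun z h1 h2 => M3031 z (hsubT0.subset h1) (hsubT1.subset h2)
  · exact fun z h1 h2 => M3032 z (hsubT0.subset h1) (hsubT2.subset h2)
  · exact fun z h1 h2 => M3132 z (hsubT1.subset h1) (hsubT2.subset h2)
  · intro p hp
    rw [Option.mem_def, hL0last, Option.some_inj] at hp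
    rw [← hp]; exact hu0C
  · intro p hp
    rw [Option.mem_def, hL1last, Option.some_inj] at hp
    rw [← hp]; exact hu1C
  · intro p hp
    rw [Option.mem_def, hL2last, Option.some_inj] at hp
    rw [← hp]; exact hu2C
  · exact fun z h1 h2 => hvL0 ((M3031 z (hsubL0.subset h1) (hsubL1.subset h2)) ▸ h1)
  · exact fun z h1 h2 => hvL0 ((M3032 z (hsubL0.subset h1) (hsubL2.subset h2)) ▸ h1)
  · exact fun z h1 h2 => hvL1 ((M3132 z (hsubL1.subset h1) (hsubL2.subset h2)) ▸ h1)
end Fwd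
/-- characterization of `W₃`-subdivisions with centre `v`. -/
theorem W3_centre_characterization (D : V → V → Prop) (v : V) :
    (∃ branch P, IsSubdivisionIn W3 D branch P ∧ branch 3 = v) ↔
    ∃ (Γ : Set V) (w : V), w ≠ v ∧ w ∈ Γ ∧
      Γ = {z | ReachIn D {x | x ≠ v} w z ∧ ReachIn D {x | x ≠ v} z w} ∧
      ∃ x1 x2 x3 : V, x1 ≠ x2 ∧ x1 ≠ x3 ∧ x2 ≠ x3 ∧
        x1 ∈ Γ ∧ x2 ∈ Γ ∧ x3 ∈ Γ ∧
        (∃ T1 T2 T3 : List V,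
          DipathFromTo (restrict D ({z | z ∉ Γ} ∪ {x1, x2, x3})) T1 v x1 ∧
          DipathFromTo (restrict D ({z | z ∉ Γ} ∪ {x1, x2, x3})) T2 v x2 ∧
          DipathFromTo (restrict D ({z | z ∉ Γ} ∪ {x1, x2, x3})) T3 v x3 ∧
          (∀ z, z ∈ T1 → z ∈ T2 → z = v) ∧
          (∀ z, z ∈ T1 → z ∈ T3 → z = v) ∧
          (∀ z, z ∈ T2 → z ∈ T3 → z = v)) ∧
        (∃ C P1 P2 P3 : List V, IsTripod (restrict D Γ) x1 x2 x3 C P1 P2 P3) := by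
  constructor
  · exact forward_direction D v
  · exact backward_direction D v
end

section
/- Let D be a digraph, v a vertex of D, X = {x1,...,xk} a set of k distinct out-neighbours of v, and Y = {y1,...,yk} a set of k distinct in-neighbours of v (X and Y may intersect). Suppose in D - v there are k pairwise disjoint dipaths P1,...,Pk from X to Y, and there is a dipath from a vertex of some Pi to a vertex of a different Pj whose internal vertices avoid {v} ∪ P1 ∪ ... ∪ Pk. Then D contains a subdivision of the superstar SS*_k with centre v. -/
open List

variable {V : Type*}

/-- The superstar `SS*ₖ` on `Fin (k+1)` with centre `0`: directed 2-cycles between the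
centre and every leaf, plus the arc from leaf `1` to leaf `2`. -/
def SSstar (k : ℕ) : Fin (k + 1) → Fin (k + 1) → Prop :=
  fun u v => (u = 0 ∧ v ≠ 0) ∨ (v = 0 ∧ u ≠ 0) ∨ (u = 1 ∧ v = 2)

private lemma chain'_restrict_mem_aux {D : V → V → Prop} {A : Set V} :
    ∀ (l : List V), l.Chain' (restrict D A) → (∀ h ∈ l.head?, h ∈ A) → ∀ z ∈ l, z ∈ A := by
  intro l
  induction l with
  | nil => intro _ _ z hz; simp at hz
  | cons c t ih =>
    intro hc hh z hz
    rcases List.mem_cons.1 hz with rfl | hz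
    · exact hh z rfl
    · cases t with
      | nil => simp at hz
      | cons d t' =>
        have h2 := List.isChain_cons_cons.1 hc
        refine ih h2.2 ?_ z hz
        intro h hh'
        have : d = h := Option.some.inj hh'
        exact this ▸ (And.right (And.right h2.1))

private lemma dropWhile_ne_head_aux [DecidableEq V] {c : V} :
    ∀ {l : List V}, c ∈ l → (l.dropWhile (fun z => z ≠ c)).head? = some c := by
  intro l
  induction l with
  | nil => simp
  | cons d t ih =>
    intro h
    by_cases hdc : d = c
    · subst hdc; simp [List.dropWhile_cons]
    · have hct : c ∈ t := by
        rcases List.mem_cons.1 h with h' | h'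
        · exact absurd h'.symm hdc
        · exact h'
      simpa [List.dropWhile_cons, hdc] using ih hct

private lemma mem_of_head?_eq_aux {l : List V} {c : V} (h : l.head? = some c) : c ∈ l := by
  cases l with
  | nil => simp at h
  | cons d t =>
    have : d = c := Option.some.inj h
    subst this
    exact List.mem_cons_self

/-- sufficiency of the disjoint linkage plus a connecting path for a
superstar subdivision with centre `v`. -/
theorem superstar_of_linkage (D : V → V → Prop) (k : ℕ) (hk : 2 ≤ k) (v : V)
    (x y : Fin k → V)
    (hxinj : Function.Injective x) (hyinj : Function.Injective y)
    (hxout : ∀ i, D v (x i)) (hyin : ∀ i, D (y i) v)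
    (hxv : ∀ i, x i ≠ v) (hyv : ∀ i, y i ≠ v)
    (P : Fin k → List V) (σ : Equiv.Perm (Fin k))
    (hP : ∀ i, DipathFromTo (restrict D {z | z ≠ v}) (P i) (x i) (y (σ i)))
    (hPdisj : ∀ i j, i ≠ j → ∀ z, z ∈ P i → z ∉ P j)
    (R : List V) (i j : Fin k) (hij : i ≠ j)
    (hR : IsDipath D R) (hRlen : 2 ≤ R.length)
    (hRhead : ∀ a ∈ R.head?, a ∈ P i) (hRlast : ∀ a ∈ R.getLast?, a ∈ P j)
    (hRint : ∀ z ∈ interiorL R, z ≠ v ∧ ∀ l, z ∉ P l) :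
    ∃ branch Q, IsSubdivisionIn (SSstar k) D branch Q ∧ branch 0 = v := by
  classical
  -- basic facts about R
  have hRne : R ≠ [] := hR.1
  obtain ⟨a, hahead⟩ : ∃ a, R.head? = some a := by
    cases R with
    | nil => exact absurd rfl hRne
    | cons c t => exact ⟨c, rfl⟩
  obtain ⟨b, hblast⟩ : ∃ b, R.getLast? = some b := ⟨_, List.getLast?_eq_getLast hRne⟩
  have haP : a ∈ P i := hRhead a hahead
  have hbP : b ∈ P j := hRlast b hblast
  -- basic facts about the paths P l
  have hPne : ∀ l, P l ≠ [] := fun l => (hP l).1.1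
  have hPchain : ∀ l, (P l).Chain' D := fun l => List.IsChain.imp (fun ⦃a b⦄ h => And.left h) (hP l).1.2.1
  have hPnodup : ∀ l, (P l).Nodup := fun l => (hP l).1.2.2
  have hPhead : ∀ l, (P l).head? = some (x l) := fun l => (hP l).2.1
  have hPlast : ∀ l, (P l).getLast? = some (y (σ l)) := fun l => (hP l).2.2
  have hPv : ∀ l, ∀ z ∈ P l, z ≠ v := by
    intro l z hz
    refine chain'_restrict_mem_aux (P l) (hP l).1.2.1 ?_ z hz
    intro h hh
    rw [hPhead l] at hh
    have h2 := Option.some.inj hh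
    exact h2 ▸ hxv l
  have hx_mem : ∀ l, x l ∈ P l := fun l => mem_of_head?_eq_aux (hPhead l)
  -- numerals in Fin (k+1)
  have hval1 : ((1 : Fin (k+1)) : ℕ) = 1 := by
    have h : (1 : Fin (k+1)) = Fin.ofNat (k+1) 1 := rfl
    rw [h, Fin.val_ofNat, Nat.mod_eq_of_lt (by omega)]
  have hval2 : ((2 : Fin (k+1)) : ℕ) = 2 := by
    have h : (2 : Fin (k+1)) = Fin.ofNat (k+1) 2 := rfl
    rw [h, Fin.val_ofNat, Nat.mod_eq_of_lt (by omega)]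
  have h1ne0 : (1 : Fin (k+1)) ≠ 0 := by
    intro h
    have := congrArg Fin.val h
    rw [hval1, Fin.val_zero] at this
    omega
  have h2ne0 : (2 : Fin (k+1)) ≠ 0 := by
    intro h
    have := congrArg Fin.val h
    rw [hval2, Fin.val_zero] at this
    omega
  have h2ne1 : (2 : Fin (k+1)) ≠ 1 := by
    intro h
    have := congrArg Fin.val h
    rw [hval2, hval1] at this
    omega
  -- indices 0 and 1 in Fin k, and the permutation e with e 0 = i, e 1 = j
  have hk0 : (0:ℕ) < k := by omega
  have hk1 : (1:ℕ) < k := by omega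
  set i0 : Fin k := ⟨0, hk0⟩ with hi0_def
  set i1 : Fin k := ⟨1, hk1⟩ with hi1_def
  set e : Equiv.Perm (Fin k) := (Equiv.swap i1 (Equiv.swap i0 i j)).trans (Equiv.swap i0 i)
    with he_def
  have hj' : Equiv.swap i0 i j ≠ i0 := by
    rw [Ne, Equiv.swap_apply_eq_iff, Equiv.swap_apply_left]
    exact Ne.symm hij
  have hi01 : i0 ≠ i1 := by
    intro h
    have := congrArg Fin.val h
    simp [hi0_def, hi1_def] at this
  have he0 : e i0 = i := by
    rw [he_def, Equiv.trans_apply,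
      Equiv.swap_apply_of_ne_of_ne hi01 (Ne.symm hj'), Equiv.swap_apply_left]
  have he1 : e i1 = j := by
    rw [he_def, Equiv.trans_apply, Equiv.swap_apply_left, Equiv.swap_apply_self]
  -- the leaf-to-index map ι
  set ι : Fin (k+1) → Fin k := fun m =>
    if m = 1 then i else if m = 2 then j
    else e ⟨m.val - 1, by have := m.isLt; omega⟩ with hι_def
  have hι1 : ι 1 = i := by simp [hι_def]
  have hι2 : ι 2 = j := by
    simp [hι_def, h2ne1]
  have hιval : ∀ m : Fin (k+1), m ≠ 1 → m ≠ 2 → ∀ c : Fin k, c.val = m.val - 1 →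
      ι m = e c := by
    intro m h1 h2 c hc
    rw [hι_def]
    simp only [if_neg h1, if_neg h2]
    exact congrArg e (Fin.ext hc.symm)
  have hgen : ∀ m : Fin (k+1), m ≠ 1 → m ≠ 2 → ∃ c : Fin k, ι m = e c ∧ c.val = m.val - 1 :=
    fun m h1 h2 => ⟨⟨m.val - 1, by have := m.isLt; omega⟩, hιval m h1 h2 _ rfl, rfl⟩
  have key : ∀ m : Fin (k+1), m ≠ 0 → m ≠ 1 → m ≠ 2 → ι m ≠ i ∧ ι m ≠ j := by
    intro m h0 h1 h2
    obtain ⟨c, hc1, hc2⟩ := hgen m h1 h2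
    have hm0 : m.val ≠ 0 := fun h => h0 (Fin.ext (by simp [h]))
    have hm1 : m.val ≠ 1 := fun h => h1 (Fin.ext (by rw [h, hval1]))
    have hm2 : m.val ≠ 2 := fun h => h2 (Fin.ext (by rw [h, hval2]))
    constructor
    · rw [hc1, ← he0]
      intro h
      have h3 := congrArg Fin.val (e.injective h)
      rw [hc2] at h3
      simp [hi0_def] at h3
      omega
    · rw [hc1, ← he1]
      intro h
      have h3 := congrArg Fin.val (e.injective h)
      rw [hc2] at h3
      simp [hi1_def] at h3
      omega
  have hιinj : ∀ m m' : Fin (k+1), m ≠ 0 → m' ≠ 0 → ι m = ι m' → m = m' := by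
    intro m m' hm hm' h
    rcases eq_or_ne m 1 with rfl | e1
    · rcases eq_or_ne m' 1 with rfl | f1
      · rfl
      · rcases eq_or_ne m' 2 with rfl | f2
        · rw [hι1, hι2] at h; exact absurd h hij
        · rw [hι1] at h; exact absurd h.symm (key m' hm' f1 f2).1
    · rcases eq_or_ne m 2 with rfl | e2
      · rcases eq_or_ne m' 1 with rfl | f1
        · rw [hι2, hι1] at h; exact absurd h.symm hij
        · rcases eq_or_ne m' 2 with rfl | f2
          · rfl
          · rw [hι2] at h; exact absurd h.symm (key m' hm' f1 f2).2
      · rcases eq_or_ne m' 1 with rfl | f1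
        · rw [hι1] at h; exact absurd h (key m hm e1 e2).1
        · rcases eq_or_ne m' 2 with rfl | f2
          · rw [hι2] at h; exact absurd h (key m hm e1 e2).2
          · obtain ⟨c, hc1, hc2⟩ := hgen m e1 e2
            obtain ⟨c', hc1', hc2'⟩ := hgen m' f1 f2
            rw [hc1, hc1'] at h
            have hcc := congrArg Fin.val (e.injective h)
            have hm0 : m.val ≠ 0 := fun h0 => hm (Fin.ext (by simp [h0]))
            have hm'0 : m'.val ≠ 0 := fun h0 => hm' (Fin.ext (by simp [h0]))
            exact Fin.ext (by omega)
  -- the branch points on the paths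
  set bp : Fin k → V := fun l => if l = i then a else if l = j then b else x l with hbp_def
  have hbpi : bp i = a := by rw [hbp_def]; simp
  have hbpj : bp j = b := by
    rw [hbp_def]
    simp [Ne.symm hij]
  have hbp_mem : ∀ l, bp l ∈ P l := by
    intro l
    rw [hbp_def]
    by_cases h1 : l = i
    · subst h1; simpa using haP
    · by_cases h2 : l = j
      · subst h2; simpa [h1] using hbP
      · simpa [h1, h2] using hx_mem l
  have hbp_ne_v : ∀ l, bp l ≠ v := fun l => hPv l _ (hbp_mem l)
  have hbp_inj : ∀ l l', bp l = bp l' → l = l' := by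
    intro l l' h
    by_contra hne
    exact hPdisj l l' hne (bp l) (hbp_mem l) (h ▸ hbp_mem l')
  -- splitting the paths at the branch points
  set TW : Fin k → List V := fun l => (P l).takeWhile (fun z => z ≠ bp l) with hTW_def
  set SUF : Fin k → List V := fun l => (P l).dropWhile (fun z => z ≠ bp l) with hSUF_def
  have hsplit : ∀ l, TW l ++ SUF l = P l := by
    intro l; rw [hTW_def, hSUF_def]; exact List.takeWhile_append_dropWhile
  have hsufhead : ∀ l, (SUF l).head? = some (bp l) := by
    intro l; rw [hSUF_def]; exact dropWhile_ne_head_aux (hbp_mem l)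
  have hsufne : ∀ l, SUF l ≠ [] := by
    intro l h
    have := hsufhead l
    rw [h] at this
    simp at this
  have hTex : ∀ l, ∃ t, SUF l = bp l :: t := by
    intro l
    cases hS : SUF l with
    | nil => exact absurd hS (hsufne l)
    | cons c t =>
      have h2 := hsufhead l
      rw [hS] at h2
      have : c = bp l := Option.some.inj h2
      exact ⟨t, by rw [this]⟩
  choose T hT using hTex
  have hsplit2 : ∀ l, P l = TW l ++ bp l :: T l := by
    intro l
    rw [← hsplit l, hT l]
  -- membership facts
  have hTWsub : ∀ l, ∀ z ∈ TW l, z ∈ P l := by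
    intro l z hz
    rw [hsplit2 l]
    exact List.mem_append_left _ hz
  have hTW_ne : ∀ l, ∀ z ∈ TW l, z ≠ bp l := by
    intro l z hz
    rw [hTW_def] at hz
    have := List.mem_takeWhile_imp hz
    simpa using this
  have hTsub : ∀ l, ∀ z ∈ T l, z ∈ P l := by
    intro l z hz
    rw [hsplit2 l]
    exact List.mem_append_right _ (List.mem_cons_of_mem _ hz)
  have hT_ne : ∀ l, ∀ z ∈ T l, z ≠ bp l := by
    intro l z hz h
    have hnd := hPnodup l
    rw [hsplit2 l] at hnd
    have h2 := (List.nodup_append.1 hnd).2.1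
    rw [List.nodup_cons] at h2
    exact h2.1 (h ▸ hz)
  have hTWT : ∀ l, ∀ z ∈ TW l, z ∉ T l := by
    intro l z hz hz'
    have hnd := hPnodup l
    rw [hsplit2 l] at hnd
    exact (List.nodup_append.1 hnd).2.2 z hz z (List.mem_cons_of_mem _ hz') rfl
  -- the initial segments as paths
  have hpre_pref : ∀ l, (TW l ++ [bp l]) <+: P l := by
    intro l
    refine ⟨T l, ?_⟩
    rw [List.append_assoc, List.singleton_append, ← hsplit2 l]
  have hprehead : ∀ l, (TW l ++ [bp l]).head? = some (x l) := by
    intro l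
    have h := hPhead l
    rw [hsplit2 l, show TW l ++ bp l :: T l = (TW l ++ [bp l]) ++ T l by
      rw [List.append_assoc, List.singleton_append],
      List.head?_append_of_ne_nil _ (by simp)] at h
    exact h
  have hQ0 : ∀ l, DipathFromTo D (v :: (TW l ++ [bp l])) v (bp l) := by
    intro l
    refine ⟨⟨by simp, ?_, ?_⟩, rfl, ?_⟩
    · rw [List.Chain', List.isChain_cons]
      constructor
      · intro h hh
        rw [hprehead l] at hh
        have h2 := Option.some.inj hh
        exact h2 ▸ hxout l
      · exact (hPchain l).prefix (hpre_pref l)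
    · rw [List.nodup_cons]
      refine ⟨fun hv => hPv l v ((hpre_pref l).subset hv) rfl, ?_⟩
      exact List.Nodup.sublist (hpre_pref l).sublist (hPnodup l)
    · rw [show v :: (TW l ++ [bp l]) = (v :: TW l) ++ [bp l] by simp,
        List.getLast?_concat]
  have hQ0len : ∀ l, 2 ≤ (v :: (TW l ++ [bp l])).length := by
    intro l
    rw [List.length_cons, List.length_append, List.length_singleton]
    omega
  -- the terminal segments as paths
  have hsuf_suffix : ∀ l, SUF l <:+ P l := fun l => ⟨TW l, hsplit l⟩
  have hsuflast : ∀ l, (SUF l).getLast? = some (y (σ l)) := by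
    intro l
    have h := hPlast l
    rw [← hsplit l, List.getLast?_append_of_ne_nil _ (hsufne l)] at h
    exact h
  have hQ1 : ∀ l, DipathFromTo D (SUF l ++ [v]) (bp l) v := by
    intro l
    refine ⟨⟨by simp, ?_, ?_⟩, ?_, List.getLast?_concat⟩
    · rw [List.Chain', List.isChain_append]
      refine ⟨(hPchain l).suffix (hsuf_suffix l), List.isChain_singleton _, ?_⟩
      intro z hz w hw
      rw [hsuflast l] at hz
      have hz2 := Option.some.inj hz
      have hw2 : v = w := Option.some.inj hw
      rw [← hz2, ← hw2]
      exact hyin (σ l)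
    · rw [List.nodup_append]
      refine ⟨List.Nodup.sublist (hsuf_suffix l).sublist (hPnodup l),
        List.nodup_singleton _, ?_⟩
      intro z hz w hw hzw
      simp at hw
      exact hPv l z ((hsuf_suffix l).subset hz) (hw ▸ hzw)
    · rw [List.head?_append_of_ne_nil _ (hsufne l), hsufhead l]
  have hQ1len : ∀ l, 2 ≤ (SUF l ++ [v]).length := by
    intro l
    rw [List.length_append, List.length_singleton]
    have := List.length_pos_iff.2 (hsufne l)
    omega
  -- interiors
  have hI0 : ∀ l, interiorL (v :: (TW l ++ [bp l])) = TW l := by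
    intro l
    simp [interiorL, List.dropLast_concat]
  have hI1 : ∀ l, interiorL (SUF l ++ [v]) = T l := by
    intro l
    rw [hT l]
    simp [interiorL, List.dropLast_concat]
  -- assemble
  refine ⟨fun m => if m = 0 then v else bp (ι m),
    fun m m' => if m = 0 then v :: (TW (ι m') ++ [bp (ι m')])
      else if m' = 0 then SUF (ι m) ++ [v] else R,
    ⟨?_, ?_, ?_, ?_⟩, if_pos rfl⟩
  · -- injectivity of branch
    intro m m' h
    dsimp only at h
    by_cases hm : m = 0 <;> by_cases hm' : m' = 0
    · rw [hm, hm']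
    · rw [if_pos hm, if_neg hm'] at h
      exact absurd h.symm (hbp_ne_v (ι m'))
    · rw [if_neg hm, if_pos hm'] at h
      exact absurd h (hbp_ne_v (ι m))
    · rw [if_neg hm, if_neg hm'] at h
      exact hιinj m m' hm hm' (hbp_inj _ _ h)
  · -- the paths
    intro u w harc
    dsimp only
    rcases harc with ⟨hu, hw⟩ | ⟨hw, hu⟩ | ⟨hu, hw⟩
    · subst hu
      simp only [if_pos rfl, if_true, ite_true, if_neg hw]
      exact ⟨hQ0 (ι w), hQ0len (ι w)⟩
    · subst hw
      simp only [if_pos rfl, if_true, ite_true, if_neg hu]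
      exact ⟨hQ1 (ι u), hQ1len (ι u)⟩
    · subst hu; subst hw
      simp only [if_neg h1ne0, if_neg h2ne0]
      rw [hι1, hι2, hbpi, hbpj]
      exact ⟨⟨hR, hahead, hblast⟩, hRlen⟩
  · -- interiors avoid branch vertices
    intro u w harc z hz w'
    dsimp only at hz ⊢
    rcases harc with ⟨hu, hw⟩ | ⟨hw, hu⟩ | ⟨hu, hw⟩
    · subst hu
      simp only [if_pos rfl, if_true, ite_true] at hz
      rw [hI0 (ι w)] at hz
      have hzP : z ∈ P (ι w) := hTWsub _ z hz
      by_cases hw' : w' = 0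
      · simp only [if_pos hw']
        exact hPv _ z hzP
      · simp only [if_neg hw']
        by_cases hll : ι w' = ι w
        · rw [hll]
          exact hTW_ne _ z hz
        · intro hzeq
          exact hPdisj (ι w) (ι w') (fun hh => hll hh.symm) z hzP (hzeq ▸ hbp_mem (ι w'))
    · subst hw
      simp only [if_pos rfl, if_true, ite_true, if_neg hu] at hz
      rw [hI1 (ι u)] at hz
      have hzP : z ∈ P (ι u) := hTsub _ z hz
      by_cases hw' : w' = 0
      · simp only [if_pos hw']
        exact hPv _ z hzP
      · simp only [if_neg hw']
        by_cases hll : ι w' = ι u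
        · rw [hll]
          exact hT_ne _ z hz
        · intro hzeq
          exact hPdisj (ι u) (ι w') (fun hh => hll hh.symm) z hzP (hzeq ▸ hbp_mem (ι w'))
    · subst hu; subst hw
      simp only [if_neg h1ne0, if_neg h2ne0] at hz
      have h2 := hRint z hz
      by_cases hw' : w' = 0
      · simp only [if_pos hw']
        exact h2.1
      · simp only [if_neg hw']
        intro hzeq
        exact h2.2 (ι w') (hzeq ▸ hbp_mem (ι w'))
  · -- internal disjointness
    intro u w u' w' harc harc' hne z hz
    dsimp only at hz ⊢
    rcases harc with ⟨hu, hw⟩ | ⟨hw, hu⟩ | ⟨hu, hw⟩ <;>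
      rcases harc' with ⟨hu', hw'⟩ | ⟨hw', hu'⟩ | ⟨hu', hw'⟩
    · -- A A
      subst hu; subst hu'
      simp only [if_pos rfl, if_true, ite_true] at hz ⊢
      rw [hI0 (ι w)] at hz
      rw [hI0 (ι w')]
      have hww' : w ≠ w' := fun h => hne (by rw [h])
      have hll : ι w ≠ ι w' := fun h => hww' (hιinj w w' hw hw' h)
      intro hz'
      exact hPdisj _ _ hll z (hTWsub _ z hz) (hTWsub _ z hz')
    · -- A B
      subst hu; subst hw'
      simp only [if_pos rfl, if_true, ite_true, if_neg hu'] at hz ⊢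
      rw [hI0 (ι w)] at hz
      rw [hI1 (ι u')]
      by_cases hll : ι u' = ι w
      · rw [hll]
        exact hTWT _ z hz
      · intro hz'
        exact hPdisj (ι w) (ι u') (fun hh => hll hh.symm) z (hTWsub _ z hz) (hTsub _ z hz')
    · -- A C
      subst hu; subst hu'; subst hw'
      simp only [if_pos rfl, if_true, ite_true, if_neg h1ne0, if_neg h2ne0] at hz ⊢
      rw [hI0 (ι w)] at hz
      intro hz'
      exact (hRint z hz').2 (ι w) (hTWsub _ z hz)
    · -- B A
      subst hw; subst hu'
      simp only [if_pos rfl, if_true, ite_true, if_neg hu] at hz ⊢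
      rw [hI1 (ι u)] at hz
      rw [hI0 (ι w')]
      by_cases hll : ι w' = ι u
      · rw [hll]
        intro hz'
        exact hTWT _ z hz' hz
      · intro hz'
        exact hPdisj (ι u) (ι w') (fun hh => hll hh.symm) z (hTsub _ z hz) (hTWsub _ z hz')
    · -- B B
      subst hw; subst hw'
      simp only [if_pos rfl, if_true, ite_true, if_neg hu, if_neg hu'] at hz ⊢
      rw [hI1 (ι u)] at hz
      rw [hI1 (ι u')]
      have huu' : u ≠ u' := fun h => hne (by rw [h])
      have hll : ι u ≠ ι u' := fun h => huu' (hιinj u u' hu hu' h)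
      intro hz'
      exact hPdisj _ _ hll z (hTsub _ z hz) (hTsub _ z hz')
    · -- B C
      subst hw; subst hu'; subst hw'
      simp only [if_pos rfl, if_true, ite_true, if_neg hu, if_neg h1ne0, if_neg h2ne0] at hz ⊢
      rw [hI1 (ι u)] at hz
      intro hz'
      exact (hRint z hz').2 (ι u) (hTsub _ z hz)
    · -- C A
      subst hu; subst hw; subst hu'
      simp only [if_pos rfl, if_true, ite_true, if_neg h1ne0, if_neg h2ne0] at hz ⊢
      rw [hI0 (ι w')]
      intro hz'
      exact (hRint z hz).2 (ι w') (hTWsub _ z hz')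
    · -- C B
      subst hu; subst hw; subst hw'
      simp only [if_pos rfl, if_true, ite_true, if_neg h1ne0, if_neg h2ne0, if_neg hu'] at hz ⊢
      rw [hI1 (ι u')]
      intro hz'
      exact (hRint z hz).2 (ι u') (hTsub _ z hz')
    · -- C C
      subst hu; subst hw
      rw [hu', hw'] at hne
      exact absurd rfl hne
end

section
/- Let D be a digraph and let P, Q be two disjoint dipaths from {s1,s2} to {t1,t2}. Suppose C = {uv, u'v'} is a tight crossing (uv' ∈ A(P), u'v ∈ A(Q), with u, v' ∈ V(P), u', v ∈ V(Q)) and there exists a C-backward path R of length at least 2 (a dipath internally disjoint from P and Q with initial vertex on P[v', t(P)] and terminal vertex on P[s(P), u], or with initial vertex on Q[v, t(Q)] and terminal vertex on Q[s(Q), u']). Then D contains an ({s1,s2},{t1,t2})-shunt. -/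
open List

variable {V : Type*}

/-- An `({s1,s2},{t1,t2})`-shunt: dipaths `P`, `Q`, `R` with `R` of length at least 2,
`s(R)` on `P`, `t(R)` on `Q`, with `P`, `Q` and the interior of `R` pairwise disjoint,
`{s(P),s(Q)} = {s1,s2}` and `{t(P),t(Q)} = {t1,t2}`. -/
def IsShunt (D : V → V → Prop) (s1 s2 t1 t2 : V) : Prop :=
  ∃ P Q R : List V,
    IsDipath D P ∧ IsDipath D Q ∧ IsDipath D R ∧ 3 ≤ R.length ∧
    (∀ z, z ∈ P → z ∉ Q) ∧
    (∀ a ∈ R.head?, a ∈ P) ∧ (∀ a ∈ R.getLast?, a ∈ Q) ∧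
    (∀ z ∈ interiorL R, z ∉ P ∧ z ∉ Q) ∧
    ((P.head? = some s1 ∧ Q.head? = some s2) ∨
      (P.head? = some s2 ∧ Q.head? = some s1)) ∧
    ((P.getLast? = some t1 ∧ Q.getLast? = some t2) ∨
      (P.getLast? = some t2 ∧ Q.getLast? = some t1))

private lemma shunt_core (D : V → V → Prop) (s1 s2 t1 t2 : V)
    (P Q : List V) (hP : IsDipath D P) (hQ : IsDipath D Q)
    (hdisj : ∀ z, z ∈ P → z ∉ Q)
    (hs : (P.head? = some s1 ∧ Q.head? = some s2) ∨
      (P.head? = some s2 ∧ Q.head? = some s1))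
    (ht : (P.getLast? = some t1 ∧ Q.getLast? = some t2) ∨
      (P.getLast? = some t2 ∧ Q.getLast? = some t1))
    (u v u' v' : V)
    (huv : D u v) (hu'v' : D u' v')
    (htight1 : ConsecIn P u v') (htight2 : ConsecIn Q u' v)
    (R : List V) (hR : IsDipath D R) (hRlen : 3 ≤ R.length)
    (hRint : ∀ z ∈ interiorL R, z ∉ P ∧ z ∉ Q)
    (hhead : ∀ h ∈ R.head?, h ∈ P ∧ (h = v' ∨ Before P v' h))
    (htail : ∀ t ∈ R.getLast?, t ∈ P ∧ (t = u ∨ Before P t u)) :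
    IsShunt D s1 s2 t1 t2 := by
  obtain ⟨k, hk, hk1⟩ := htight1
  obtain ⟨m, hm, hm1⟩ := htight2
  have hkP : k + 1 < P.length := (List.getElem?_eq_some_iff.mp hk1).1
  have hmQ : m + 1 < Q.length := (List.getElem?_eq_some_iff.mp hm1).1
  set Pu := P.take (k+1) with hPu
  set Pv := P.drop (k+1) with hPv
  set Qu := Q.take (m+1) with hQu
  set Qv := Q.drop (m+1) with hQv
  have hPsplit : Pu ++ Pv = P := List.take_append_drop _ _
  have hQsplit : Qu ++ Qv = Q := List.take_append_drop _ _
  -- nodup and disjointness of the pieces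
  have hPnd : (Pu ++ Pv).Nodup := by rw [hPsplit]; exact hP.2.2
  have hQnd : (Qu ++ Qv).Nodup := by rw [hQsplit]; exact hQ.2.2
  obtain ⟨hPund, hPvnd, hPdisj⟩ := List.nodup_append'.mp hPnd
  obtain ⟨hQund, hQvnd, hQdisj⟩ := List.nodup_append'.mp hQnd
  -- lengths
  have hPulen : Pu.length = k + 1 := by
    rw [hPu, List.length_take]; omega
  have hQulen : Qu.length = m + 1 := by
    rw [hQu, List.length_take]; omega
  -- endpoints of the pieces
  have hPuLast : Pu.getLast? = some u := by
    rw [List.getLast?_eq_getElem?, hPulen]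
    simpa [hPu, List.getElem?_take_of_lt (Nat.lt_succ_self k)] using hk
  have hQuLast : Qu.getLast? = some u' := by
    rw [List.getLast?_eq_getElem?, hQulen]
    simpa [hQu, List.getElem?_take_of_lt (Nat.lt_succ_self m)] using hm
  have hPvHead : Pv.head? = some v' := by
    rw [hPv, List.head?_eq_getElem?, List.getElem?_drop]
    simpa using hk1
  have hQvHead : Qv.head? = some v := by
    rw [hQv, List.head?_eq_getElem?, List.getElem?_drop]
    simpa using hm1
  have hPuHead : Pu.head? = P.head? := by
    rw [List.head?_eq_getElem?, List.head?_eq_getElem?, hPu, List.getElem?_take_of_lt (Nat.succ_pos k)]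
  have hQuHead : Qu.head? = Q.head? := by
    rw [List.head?_eq_getElem?, List.head?_eq_getElem?, hQu, List.getElem?_take_of_lt (Nat.succ_pos m)]
  have hPvLast : Pv.getLast? = P.getLast? := by
    rw [List.getLast?_eq_getElem?, List.getLast?_eq_getElem?, hPv, List.getElem?_drop,
      List.length_drop]
    congr 1
    omega
  have hQvLast : Qv.getLast? = Q.getLast? := by
    rw [List.getLast?_eq_getElem?, List.getLast?_eq_getElem?, hQv, List.getElem?_drop,
      List.length_drop]
    congr 1
    omega
  have hPune : Pu ≠ [] := by
    intro h; rw [h] at hPulen; simp at hPulen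
  have hQune : Qu ≠ [] := by
    intro h; rw [h] at hQulen; simp at hQulen
  have hPvne : Pv ≠ [] := by
    intro h; rw [h] at hPvHead; simp at hPvHead
  have hQvne : Qv ≠ [] := by
    intro h; rw [h] at hQvHead; simp at hQvHead
  -- membership of the ends of R in the right pieces
  have memPv : ∀ h, (h = v' ∨ Before P v' h) → h ∈ Pv := by
    intro h hcase
    rcases hcase with rfl | ⟨i, j, hij, hi, hj⟩
    · exact List.mem_of_mem_head? (by rw [hPvHead]; rfl)
    · have hiL : i < P.length := (List.getElem?_eq_some_iff.mp hi).1
      have hieq : i = k + 1 :=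
        (List.getElem?_inj hiL hP.2.2).mp (hi.trans hk1.symm)
      refine List.mem_of_getElem? (i := j - (k+1)) ?_
      rw [hPv, List.getElem?_drop]
      rw [show k + 1 + (j - (k+1)) = j by omega]
      exact hj
  have memPu : ∀ t, (t = u ∨ Before P t u) → t ∈ Pu := by
    intro t hcase
    rcases hcase with rfl | ⟨i, j, hij, hi, hj⟩
    · refine List.mem_of_getElem? (i := k) ?_
      rw [hPu, List.getElem?_take_of_lt (Nat.lt_succ_self k)]; exact hk
    · have hjL : j < P.length := (List.getElem?_eq_some_iff.mp hj).1
      have hjeq : j = k :=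
        (List.getElem?_inj hjL hP.2.2).mp (hj.trans hk.symm)
      refine List.mem_of_getElem? (i := i) ?_
      rw [hPu, List.getElem?_take_of_lt (by omega)]; exact hi
  -- the two new paths
  refine ⟨Qu ++ Pv, Pu ++ Qv, R, ?_, ?_, hR, hRlen, ?_, ?_, ?_, ?_, ?_, ?_⟩
  · -- Qu ++ Pv is a dipath
    refine ⟨by simp [hQune], ?_, ?_⟩
    · refine List.isChain_append.mpr ⟨hQ.2.1.take _, hP.2.1.drop _, ?_⟩
      intro x hx y hy
      rw [hQuLast] at hx; rw [hPvHead] at hy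
      simp only [Option.mem_def, Option.some_inj] at hx hy
      subst hx; subst hy; exact hu'v'
    · refine List.nodup_append'.mpr ⟨hQund, hPvnd, ?_⟩
      intro a ha hb
      exact hdisj a (List.mem_of_mem_drop hb) (List.mem_of_mem_take ha)
  · -- Pu ++ Qv is a dipath
    refine ⟨by simp [hPune], ?_, ?_⟩
    · refine List.isChain_append.mpr ⟨hP.2.1.take _, hQ.2.1.drop _, ?_⟩
      intro x hx y hy
      rw [hPuLast] at hx; rw [hQvHead] at hy
      simp only [Option.mem_def, Option.some_inj] at hx hy
      subst hx; subst hy; exact huv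
    · refine List.nodup_append'.mpr ⟨hPund, hQvnd, ?_⟩
      intro a ha hb
      exact hdisj a (List.mem_of_mem_take ha) (List.mem_of_mem_drop hb)
  · -- disjointness of the two new paths
    intro z hz hz'
    rcases List.mem_append.mp hz with h1 | h1 <;>
      rcases List.mem_append.mp hz' with h2 | h2
    · exact hdisj z (List.mem_of_mem_take h2) (List.mem_of_mem_take h1)
    · exact hQdisj h1 h2
    · exact hPdisj h2 h1
    · exact hdisj z (List.mem_of_mem_drop h1) (List.mem_of_mem_drop h2)
  · -- head of R on Qu ++ Pv
    intro a ha
    exact List.mem_append.mpr (Or.inr (memPv a (hhead a ha).2))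
  · -- last of R on Pu ++ Qv
    intro a ha
    exact List.mem_append.mpr (Or.inl (memPu a (htail a ha).2))
  · -- interior of R disjoint from both paths
    intro z hz
    obtain ⟨hzP, hzQ⟩ := hRint z hz
    constructor
    · intro hmem
      rcases List.mem_append.mp hmem with h1 | h1
      · exact hzQ (List.mem_of_mem_take h1)
      · exact hzP (List.mem_of_mem_drop h1)
    · intro hmem
      rcases List.mem_append.mp hmem with h1 | h1
      · exact hzP (List.mem_of_mem_take h1)
      · exact hzQ (List.mem_of_mem_drop h1)
  · -- sources
    have e1 : (Qu ++ Pv).head? = Q.head? := by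
      rw [List.head?_append, hQuHead]
      cases hh : Q.head? with
      | none => rw [← hQuHead] at hh; exact absurd (List.head?_eq_none_iff.mp hh) hQune
      | some a => rfl
    have e2 : (Pu ++ Qv).head? = P.head? := by
      rw [List.head?_append, hPuHead]
      cases hh : P.head? with
      | none => rw [← hPuHead] at hh; exact absurd (List.head?_eq_none_iff.mp hh) hPune
      | some a => rfl
    rcases hs with ⟨h1, h2⟩ | ⟨h1, h2⟩
    · exact Or.inr ⟨e1.trans h2, e2.trans h1⟩
    · exact Or.inl ⟨e1.trans h2, e2.trans h1⟩
  · -- sinks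
    have e1 : (Qu ++ Pv).getLast? = P.getLast? := by
      rw [List.getLast?_append, hPvLast]
      cases hh : P.getLast? with
      | none =>
          rw [← hPvLast] at hh
          exact absurd (List.getLast?_eq_none_iff.mp hh) hPvne
      | some a => rfl
    have e2 : (Pu ++ Qv).getLast? = Q.getLast? := by
      rw [List.getLast?_append, hQvLast]
      cases hh : Q.getLast? with
      | none =>
          rw [← hQvLast] at hh
          exact absurd (List.getLast?_eq_none_iff.mp hh) hQvne
      | some a => rfl
    rcases ht with ⟨h1, h2⟩ | ⟨h1, h2⟩
    · exact Or.inl ⟨e1.trans h1, e2.trans h2⟩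
    · exact Or.inr ⟨e1.trans h1, e2.trans h2⟩

/-- a tight crossing with a backward path of length at least 2
yields a shunt. -/
theorem shunt_of_backward_path (D : V → V → Prop) (s1 s2 t1 t2 : V)
    (P Q : List V) (hP : IsDipath D P) (hQ : IsDipath D Q)
    (hdisj : ∀ z, z ∈ P → z ∉ Q)
    (hs : (P.head? = some s1 ∧ Q.head? = some s2) ∨
      (P.head? = some s2 ∧ Q.head? = some s1))
    (ht : (P.getLast? = some t1 ∧ Q.getLast? = some t2) ∨
      (P.getLast? = some t2 ∧ Q.getLast? = some t1))
    (u v u' v' : V)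
    (huv : D u v) (hu'v' : D u' v')
    (htight1 : ConsecIn P u v') (htight2 : ConsecIn Q u' v)
    (R : List V) (hR : IsDipath D R) (hRlen : 3 ≤ R.length)
    (hRint : ∀ z ∈ interiorL R, z ∉ P ∧ z ∉ Q)
    (hRends :
      ((∀ h ∈ R.head?, h ∈ P ∧ (h = v' ∨ Before P v' h)) ∧
        (∀ t ∈ R.getLast?, t ∈ P ∧ (t = u ∨ Before P t u))) ∨
      ((∀ h ∈ R.head?, h ∈ Q ∧ (h = v ∨ Before Q v h)) ∧
        (∀ t ∈ R.getLast?, t ∈ Q ∧ (t = u' ∨ Before Q t u')))) :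
    IsShunt D s1 s2 t1 t2 := by
  rcases hRends with ⟨hhead, htail⟩ | ⟨hhead, htail⟩
  · exact shunt_core D s1 s2 t1 t2 P Q hP hQ hdisj hs ht u v u' v' huv hu'v'
      htight1 htight2 R hR hRlen hRint hhead htail
  · exact shunt_core D s1 s2 t1 t2 Q P hQ hP
      (fun z hzQ hzP => hdisj z hzP hzQ)
      (hs.elim (fun ⟨a, b⟩ => Or.inr ⟨b, a⟩) (fun ⟨a, b⟩ => Or.inl ⟨b, a⟩))
      (ht.elim (fun ⟨a, b⟩ => Or.inr ⟨b, a⟩) (fun ⟨a, b⟩ => Or.inl ⟨b, a⟩))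
      u' v' u v hu'v' huv htight2 htight1 R hR hRlen
      (fun z hz => ⟨(hRint z hz).2, (hRint z hz).1⟩) hhead htail
end
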